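/- Let E be a graph and R a unital commutative ring. If (H,S) is an admissible pair in E, then the quotient algebra L_R(E)/I(H,S) is isomorphic as an R-algebra to the Leavitt path algebra L_R(E/(H,S)) of the quotient graph. -/

import Mathlib

structure LPGraph where
  V : Type
  E : Type
  s : E → V
  r : E → V

namespace LPGraph

/-- `v ≥ w`: there is a directed path (possibly trivial) from `v` to `w`. -/
def Reaches (G : LPGraph) (v w : G.V) : Prop :=
  Relation.ReflTransGen (fun a b => ∃ e : G.E, G.s e = a ∧ G.r e = b) v w

def Hereditary (G : LPGraph) (X : Set G.V) : Prop :=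
  ∀ e : G.E, G.s e ∈ X → G.r e ∈ X

def Saturated (G : LPGraph) (X : Set G.V) : Prop :=
  ∀ v : G.V, {e : G.E | G.s e = v}.Finite → {e : G.E | G.s e = v}.Nonempty →
    (∀ e : G.E, G.s e = v → G.r e ∈ X) → v ∈ X

/-- The saturation of `X`: the smallest saturated subset containing `X`. -/
def saturation (G : LPGraph) (X : Set G.V) : Set G.V :=
  ⋂₀ {S : Set G.V | G.Saturated S ∧ X ⊆ S}

def tree (G : LPGraph) (v : G.V) : Set G.V := {w | G.Reaches v w}

def MT1 (G : LPGraph) (M : Set G.V) : Prop :=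
  ∀ v w : G.V, w ∈ M → G.Reaches v w → v ∈ M

def MT2 (G : LPGraph) (M : Set G.V) : Prop :=
  ∀ v ∈ M, {e : G.E | G.s e = v}.Finite → {e : G.E | G.s e = v}.Nonempty →
    ∃ e : G.E, G.s e = v ∧ G.r e ∈ M

def MT3on (G : LPGraph) (M : Set G.V) : Prop :=
  ∀ v ∈ M, ∀ w ∈ M, ∃ y ∈ M, G.Reaches v y ∧ G.Reaches w y

def MT3 (G : LPGraph) : Prop :=
  ∀ v w : G.V, ∃ y : G.V, G.Reaches v y ∧ G.Reaches w y

def Omega (G : LPGraph) (X : Set G.V) : Set G.V :=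
  {w | w ∉ X ∧ ∀ v ∈ X, ¬ G.Reaches w v}

def OmegaV (G : LPGraph) (v : G.V) : Set G.V :=
  {w | w ≠ v ∧ ¬ G.Reaches w v}

end LPGraph

namespace LPGraph

def IsBifurcation (G : LPGraph) (v : G.V) : Prop :=
  ∃ e f : G.E, e ≠ f ∧ G.s e = v ∧ G.s f = v

def IsPathList (G : LPGraph) (l : List G.E) : Prop :=
  l.Chain' (fun e f => G.r e = G.s f)

def IsClosedPath (G : LPGraph) (v : G.V) (l : List G.E) : Prop :=
  l ≠ [] ∧ G.IsPathList l ∧ (∀ e ∈ l.head?, G.s e = v) ∧ (∀ e ∈ l.getLast?, G.r e = v)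

def IsClosedSimplePath (G : LPGraph) (v : G.V) (l : List G.E) : Prop :=
  G.IsClosedPath v l ∧ ∀ e ∈ l.tail, G.s e ≠ v

def ConditionK (G : LPGraph) : Prop :=
  ∀ v : G.V, (¬ ∃ l : List G.E, G.IsClosedPath v l) ∨
    (∃ l₁ l₂ : List G.E, G.IsClosedSimplePath v l₁ ∧ G.IsClosedSimplePath v l₂ ∧ l₁ ≠ l₂)

def ConditionL (G : LPGraph) : Prop :=
  ∀ (v : G.V) (l : List G.E), G.IsClosedSimplePath v l →
    ∃ e ∈ l, ∃ f : G.E, f ≠ e ∧ G.s f = G.s e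

/-- `v` is a line point: no vertex in the tree of `v` is a bifurcation or the base of a
closed path. -/
def LinePoint (G : LPGraph) (v : G.V) : Prop :=
  ∀ w : G.V, G.Reaches v w →
    ¬ G.IsBifurcation w ∧ ¬ ∃ l : List G.E, G.IsClosedPath w l

/-- `B_H`: vertices outside `H` emitting infinitely many edges, but finitely many
(and at least one) into `E⁰ \ H`. -/
def BH (G : LPGraph) (H : Set G.V) : Set G.V :=
  {v | v ∉ H ∧ {e : G.E | G.s e = v}.Infinite ∧
    {e : G.E | G.s e = v ∧ G.r e ∉ H}.Finite ∧
    {e : G.E | G.s e = v ∧ G.r e ∉ H}.Nonempty}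

/-- An admissible pair: `H` hereditary saturated, `S ⊆ B_H`. -/
def Admissible (G : LPGraph) (H S : Set G.V) : Prop :=
  G.Hereditary H ∧ G.Saturated H ∧ S ⊆ G.BH H

/-- Finite paths in `G`, indexed by source and range. -/
inductive Path (G : LPGraph) : G.V → G.V → Type
  | nil (v : G.V) : Path G v v
  | cons (e : G.E) {w : G.V} (p : Path G (G.r e) w) : Path G (G.s e) w

def Path.length {G : LPGraph} : ∀ {v w : G.V}, Path G v w → ℕ
  | _, _, .nil _ => 0
  | _, _, .cons _ p => p.length + 1

/-- The path contains no bifurcations among the sources of its edges. -/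
def Path.NoBif {G : LPGraph} : ∀ {v w : G.V}, Path G v w → Prop
  | _, _, .nil _ => True
  | _, _, .cons e p => (∀ f : _, LPGraph.s _ f = LPGraph.s _ e → f = e) ∧ p.NoBif

end LPGraph

/-- Generators of the Leavitt path algebra: vertices, real edges and ghost edges. -/
inductive LGen (G : LPGraph) : Type
  | vertex : G.V → LGen G
  | edge : G.E → LGen G
  | ghost : G.E → LGen G

variable (R : Type) [CommRing R] (G : LPGraph)

noncomputable def fv (v : G.V) : FreeAlgebra R (LGen G) := FreeAlgebra.ι R (LGen.vertex v)
noncomputable def fe (e : G.E) : FreeAlgebra R (LGen G) := FreeAlgebra.ι R (LGen.edge e)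
noncomputable def fg (e : G.E) : FreeAlgebra R (LGen G) := FreeAlgebra.ι R (LGen.ghost e)

/-- The defining relations of the Leavitt path algebra. -/
inductive LRel : FreeAlgebra R (LGen G) → FreeAlgebra R (LGen G) → Prop
  | idem (v : G.V) : LRel (fv R G v * fv R G v) (fv R G v)
  | orth (v w : G.V) (h : v ≠ w) : LRel (fv R G v * fv R G w) 0
  | edge_src (e : G.E) : LRel (fv R G (G.s e) * fe R G e) (fe R G e)
  | edge_rng (e : G.E) : LRel (fe R G e * fv R G (G.r e)) (fe R G e)
  | ghost_rng (e : G.E) : LRel (fv R G (G.r e) * fg R G e) (fg R G e)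
  | ghost_src (e : G.E) : LRel (fg R G e * fv R G (G.s e)) (fg R G e)
  | ck1_same (e : G.E) : LRel (fg R G e * fe R G e) (fv R G (G.r e))
  | ck1_diff (e f : G.E) (h : e ≠ f) : LRel (fg R G e * fe R G f) 0
  | ck2 (v : G.V) (h1 : {e : G.E | G.s e = v}.Finite)
      (h2 : {e : G.E | G.s e = v}.Nonempty) :
      LRel (fv R G v) (∑ e ∈ h1.toFinset, fe R G e * fg R G e)

/-- The Leavitt path algebra `L_R(E)`. -/
abbrev LPA := RingQuot (LRel R G)

noncomputable def Xv (v : G.V) : LPA R G := RingQuot.mkAlgHom R (LRel R G) (fv R G v)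
noncomputable def Xe (e : G.E) : LPA R G := RingQuot.mkAlgHom R (LRel R G) (fe R G e)
noncomputable def Xg (e : G.E) : LPA R G := RingQuot.mkAlgHom R (LRel R G) (fg R G e)

open MulOpposite in
/-- The involution on `L_R(E)`, built from the universal property, sending
`v ↦ v`, `e ↦ e*`, `e* ↦ e` and reversing products. -/
noncomputable def preStar : FreeAlgebra R (LGen G) →ₐ[R] (LPA R G)ᵐᵒᵖ :=
  FreeAlgebra.lift R fun x => match x with
    | LGen.vertex v => op (Xv R G v)
    | LGen.edge e => op (Xg R G e)
    | LGen.ghost e => op (Xe R G e)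

section starlemmas

lemma Xv_mul_self (v : G.V) : Xv R G v * Xv R G v = Xv R G v := by
  simpa only [Xv, map_mul] using RingQuot.mkAlgHom_rel R (LRel.idem (R := R) (G := G) v)

lemma Xv_mul_Xv (v w : G.V) (h : v ≠ w) : Xv R G v * Xv R G w = 0 := by
  simpa only [Xv, map_mul, map_zero] using
    RingQuot.mkAlgHom_rel R (LRel.orth (R := R) (G := G) v w h)

lemma Xv_mul_Xe (e : G.E) : Xv R G (G.s e) * Xe R G e = Xe R G e := by
  simpa only [Xv, Xe, map_mul] using RingQuot.mkAlgHom_rel R (LRel.edge_src (R := R) (G := G) e)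

lemma Xe_mul_Xv (e : G.E) : Xe R G e * Xv R G (G.r e) = Xe R G e := by
  simpa only [Xv, Xe, map_mul] using RingQuot.mkAlgHom_rel R (LRel.edge_rng (R := R) (G := G) e)

lemma Xv_mul_Xg (e : G.E) : Xv R G (G.r e) * Xg R G e = Xg R G e := by
  simpa only [Xv, Xg, map_mul] using RingQuot.mkAlgHom_rel R (LRel.ghost_rng (R := R) (G := G) e)

lemma Xg_mul_Xv (e : G.E) : Xg R G e * Xv R G (G.s e) = Xg R G e := by
  simpa only [Xv, Xg, map_mul] using RingQuot.mkAlgHom_rel R (LRel.ghost_src (R := R) (G := G) e)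

lemma Xg_mul_Xe_same (e : G.E) : Xg R G e * Xe R G e = Xv R G (G.r e) := by
  simpa only [Xv, Xe, Xg, map_mul] using
    RingQuot.mkAlgHom_rel R (LRel.ck1_same (R := R) (G := G) e)

lemma Xg_mul_Xe_diff (e f : G.E) (h : e ≠ f) : Xg R G e * Xe R G f = 0 := by
  simpa only [Xe, Xg, map_mul, map_zero] using
    RingQuot.mkAlgHom_rel R (LRel.ck1_diff (R := R) (G := G) e f h)

lemma Xv_ck2 (v : G.V) (h1 : {e : G.E | G.s e = v}.Finite)
    (h2 : {e : G.E | G.s e = v}.Nonempty) :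
    Xv R G v = ∑ e ∈ h1.toFinset, Xe R G e * Xg R G e := by
  simpa only [Xv, Xe, Xg, map_mul, map_sum] using
    RingQuot.mkAlgHom_rel R (LRel.ck2 (R := R) (G := G) v h1 h2)

open MulOpposite in
lemma preStar_rel : ∀ ⦃a b : FreeAlgebra R (LGen G)⦄, LRel R G a b →
    preStar R G a = preStar R G b := by
  intro a b h
  induction h with
  | idem v =>
      simp only [map_mul, preStar, fv, FreeAlgebra.lift_ι_apply, ← op_mul]
      exact congrArg op (Xv_mul_self R G v)
  | orth v w h =>
      simp only [map_mul, map_zero, preStar, fv, FreeAlgebra.lift_ι_apply, ← op_mul]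
      rw [Xv_mul_Xv R G w v h.symm]; rfl
  | edge_src e =>
      simp only [map_mul, preStar, fv, fe, FreeAlgebra.lift_ι_apply, ← op_mul]
      exact congrArg op (Xg_mul_Xv R G e)
  | edge_rng e =>
      simp only [map_mul, preStar, fv, fe, FreeAlgebra.lift_ι_apply, ← op_mul]
      exact congrArg op (Xv_mul_Xg R G e)
  | ghost_rng e =>
      simp only [map_mul, preStar, fv, fg, FreeAlgebra.lift_ι_apply, ← op_mul]
      exact congrArg op (Xe_mul_Xv R G e)
  | ghost_src e =>
      simp only [map_mul, preStar, fv, fg, FreeAlgebra.lift_ι_apply, ← op_mul]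
      exact congrArg op (Xv_mul_Xe R G e)
  | ck1_same e =>
      simp only [map_mul, preStar, fv, fe, fg, FreeAlgebra.lift_ι_apply, ← op_mul]
      exact congrArg op (Xg_mul_Xe_same R G e)
  | ck1_diff e f h =>
      simp only [map_mul, map_zero, preStar, fe, fg, FreeAlgebra.lift_ι_apply, ← op_mul]
      rw [Xg_mul_Xe_diff R G f e h.symm]; rfl
  | ck2 v h1 h2 =>
      simp only [map_sum, map_mul, preStar, fv, fe, fg, FreeAlgebra.lift_ι_apply, ← op_mul,
        ← Finset.op_sum]
      exact congrArg op (Xv_ck2 R G v h1 h2)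

end starlemmas

open MulOpposite in
noncomputable def starHom : LPA R G →ₐ[R] (LPA R G)ᵐᵒᵖ :=
  RingQuot.liftAlgHom R ⟨preStar R G, preStar_rel R G⟩

/-- The canonical involution (`*`-operation) on `L_R(E)`. -/
noncomputable def lpaStar (x : LPA R G) : LPA R G := MulOpposite.unop (starHom R G x)

/-- The element of `L_R(E)` associated to a path (product of real edges;
a trivial path gives the vertex). -/
noncomputable def pathE : ∀ {v w : G.V}, G.Path v w → LPA R G
  | _, _, .nil v => Xv R G v
  | _, _, .cons e p => Xe R G e * pathE p

/-- The ghost element `α*` of `L_R(E)` associated to a path `α`. -/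
noncomputable def pathG : ∀ {v w : G.V}, G.Path v w → LPA R G
  | _, _, .nil v => Xv R G v
  | _, _, .cons e p => pathG p * Xg R G e

/-- The homogeneous lpaComponent of degree `k` of `L_R(E)`:
the `R`-span of elements `αβ*` with `|α| - |β| = k`. -/
noncomputable def lpaComponent (k : ℤ) : Submodule R (LPA R G) :=
  Submodule.span R {x : LPA R G |
    ∃ (v₁ v₂ w : G.V) (α : G.Path v₁ w) (β : G.Path v₂ w),
      (α.length : ℤ) - (β.length : ℤ) = k ∧ x = pathE R G α * pathG R G β}

/-- A two-sided ideal of `L_R(E)` is graded if each of its elements is an `R`-linear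
combination of homogeneous elements belonging to the ideal. -/
def IsGraded (I : TwoSidedIdeal (LPA R G)) : Prop :=
  ∀ x ∈ I, x ∈ Submodule.span R
    (⋃ k : ℤ, (I : Set (LPA R G)) ∩ (lpaComponent R G k : Set (LPA R G)))

/-- A basic ideal: `r • x ∈ I` with `r ≠ 0` implies `x ∈ I`, for `x` a vertex or an
element of the form `v - ∑ᵢ eᵢeᵢ*` with `s(eᵢ) = v`. -/
def IsBasic (I : TwoSidedIdeal (LPA R G)) : Prop :=
  (∀ (r : R) (v : G.V), r ≠ 0 → r • Xv R G v ∈ I → Xv R G v ∈ I) ∧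
  (∀ (r : R) (v : G.V) (F : Finset G.E), r ≠ 0 → (∀ e ∈ F, G.s e = v) →
    r • (Xv R G v - ∑ e ∈ F, Xe R G e * Xg R G e) ∈ I →
    (Xv R G v - ∑ e ∈ F, Xe R G e * Xg R G e) ∈ I)

/-- `v^H = v - ∑_{s(e)=v, r(e)∉H} ee*`. -/
noncomputable def vH (H : Set G.V) (v : G.V) : LPA R G :=
  Xv R G v - ∑ᶠ (e : G.E) (_ : G.s e = v ∧ G.r e ∉ H), Xe R G e * Xg R G e

/-- `I(H,S)`: the two-sided ideal generated by `{v : v ∈ H} ∪ {v^H : v ∈ S}`. -/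
noncomputable def IHS (H S : Set G.V) : TwoSidedIdeal (LPA R G) :=
  TwoSidedIdeal.span ((fun v => Xv R G v) '' H ∪ (fun v => vH R G H v) '' S)

/-- The quotient ring of `L_R(E)` by a two-sided ideal, as an `R`-algebra. -/
abbrev QuotLPA (I : TwoSidedIdeal (LPA R G)) := RingQuot (fun a b : LPA R G => a - b ∈ I)

/-- The quotient graph `E/(H,S)`. -/
def quotGraph (H S : Set G.V) (hH : G.Hereditary H) : LPGraph where
  V := {v : G.V // v ∉ H} ⊕ {v : G.V // v ∈ G.BH H ∧ v ∉ S}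
  E := {e : G.E // G.r e ∉ H} ⊕ {e : G.E // G.r e ∈ G.BH H ∧ G.r e ∉ S}
  s := fun x => match x with
    | Sum.inl e => Sum.inl ⟨G.s e.1, fun h => e.2 (hH e.1 h)⟩
    | Sum.inr e => Sum.inl ⟨G.s e.1, fun h => e.2.1.1 (hH e.1 h)⟩
  r := fun x => match x with
    | Sum.inl e => Sum.inl ⟨G.r e.1, e.2⟩
    | Sum.inr e => Sum.inr ⟨G.r e.1, e.2⟩

/-! ### Auxiliary lemmas for the quotient theorem -/

open scoped Classical

section AuxLPA

variable (R : Type) [CommRing R] (G : LPGraph)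

lemma Xv_mul_Xe_ne (w : G.V) (e : G.E) (h : w ≠ G.s e) : Xv R G w * Xe R G e = 0 := by
  rw [← Xv_mul_Xe R G e, ← mul_assoc, Xv_mul_Xv R G w (G.s e) h, zero_mul]

lemma Xe_mul_Xv_ne (e : G.E) (w : G.V) (h : G.r e ≠ w) : Xe R G e * Xv R G w = 0 := by
  rw [← Xe_mul_Xv R G e, mul_assoc, Xv_mul_Xv R G _ _ h, mul_zero]

lemma Xv_mul_Xg_ne (w : G.V) (e : G.E) (h : w ≠ G.r e) : Xv R G w * Xg R G e = 0 := by
  rw [← Xv_mul_Xg R G e, ← mul_assoc, Xv_mul_Xv R G _ _ h, zero_mul]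

lemma Xg_mul_Xv_ne (e : G.E) (w : G.V) (h : G.s e ≠ w) : Xg R G e * Xv R G w = 0 := by
  rw [← Xg_mul_Xv R G e, mul_assoc, Xv_mul_Xv R G _ _ h, mul_zero]

lemma Xe_mul_Xg_ne (a b : G.E) (h : G.r a ≠ G.r b) : Xe R G a * Xg R G b = 0 := by
  rw [← Xe_mul_Xv R G a, mul_assoc, Xv_mul_Xg_ne R G _ _ h, mul_zero]

variable (H : Set G.V)

/-- `F v` is the set of edges from `v` landing outside `H`. -/
def FSet (v : G.V) : Set G.E := {e : G.E | G.s e = v ∧ G.r e ∉ H}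

lemma vH_eq (v : G.V) (hF : (FSet G H v).Finite) :
    vH R G H v = Xv R G v - ∑ e ∈ hF.toFinset, Xe R G e * Xg R G e := by
  have : vH R G H v
      = Xv R G v - ∑ᶠ e ∈ {e : G.E | G.s e = v ∧ G.r e ∉ H}, Xe R G e * Xg R G e := rfl
  rw [this]
  congr 1
  rw [← finsum_mem_coe_finset, Set.Finite.coe_toFinset hF]
  rfl

lemma pH_mul_pH (v : G.V) (hF : (FSet G H v).Finite) :
    (∑ e ∈ hF.toFinset, Xe R G e * Xg R G e) * (∑ e ∈ hF.toFinset, Xe R G e * Xg R G e)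
      = ∑ e ∈ hF.toFinset, Xe R G e * Xg R G e := by
  rw [Finset.sum_mul_sum]
  refine Finset.sum_congr rfl fun e he => ?_
  refine Finset.sum_eq_single_of_mem e he (fun f _ hfe => ?_) |>.trans ?_
  · rw [mul_assoc, ← mul_assoc (Xg R G e), Xg_mul_Xe_diff R G e f (fun h => hfe h.symm),
      zero_mul, mul_zero]
  · rw [mul_assoc, ← mul_assoc (Xg R G e), Xg_mul_Xe_same, Xv_mul_Xg]

lemma Xv_mul_pH (v : G.V) (hF : (FSet G H v).Finite) :
    Xv R G v * ∑ e ∈ hF.toFinset, Xe R G e * Xg R G e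
      = ∑ e ∈ hF.toFinset, Xe R G e * Xg R G e := by
  rw [Finset.mul_sum]
  refine Finset.sum_congr rfl fun e he => ?_
  have h1 := (hF.mem_toFinset.mp he).1
  rw [← mul_assoc, ← h1, Xv_mul_Xe]

lemma pH_mul_Xv (v : G.V) (hF : (FSet G H v).Finite) :
    (∑ e ∈ hF.toFinset, Xe R G e * Xg R G e) * Xv R G v
      = ∑ e ∈ hF.toFinset, Xe R G e * Xg R G e := by
  rw [Finset.sum_mul]
  refine Finset.sum_congr rfl fun e he => ?_
  have h1 := (hF.mem_toFinset.mp he).1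
  rw [mul_assoc, ← h1, Xg_mul_Xv]

lemma Xv_ne_mul_pH (v w : G.V) (hw : w ≠ v) (hF : (FSet G H v).Finite) :
    Xv R G w * ∑ e ∈ hF.toFinset, Xe R G e * Xg R G e = 0 := by
  rw [Finset.mul_sum]
  refine Finset.sum_eq_zero fun e he => ?_
  have h1 := (hF.mem_toFinset.mp he).1
  rw [← mul_assoc, Xv_mul_Xe_ne R G w e (by rw [h1]; exact hw), zero_mul]

lemma pH_mul_Xv_ne (v w : G.V) (hw : v ≠ w) (hF : (FSet G H v).Finite) :
    (∑ e ∈ hF.toFinset, Xe R G e * Xg R G e) * Xv R G w = 0 := by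
  rw [Finset.sum_mul]
  refine Finset.sum_eq_zero fun e he => ?_
  have h1 := (hF.mem_toFinset.mp he).1
  rw [mul_assoc, Xg_mul_Xv_ne R G e w (by rw [h1]; exact hw), mul_zero]

lemma pH_mul_Xe (v : G.V) (hF : (FSet G H v).Finite) (e : G.E) (he : e ∈ FSet G H v) :
    (∑ f ∈ hF.toFinset, Xe R G f * Xg R G f) * Xe R G e = Xe R G e := by
  rw [Finset.sum_mul]
  refine Finset.sum_eq_single_of_mem e (hF.mem_toFinset.mpr he) (fun f _ hfe => ?_) |>.trans ?_
  · rw [mul_assoc, Xg_mul_Xe_diff R G f e hfe, mul_zero]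
  · rw [mul_assoc, Xg_mul_Xe_same, Xe_mul_Xv]

lemma Xg_mul_pH (v : G.V) (hF : (FSet G H v).Finite) (e : G.E) (he : e ∈ FSet G H v) :
    Xg R G e * ∑ f ∈ hF.toFinset, Xe R G f * Xg R G f = Xg R G e := by
  rw [Finset.mul_sum]
  refine Finset.sum_eq_single_of_mem e (hF.mem_toFinset.mpr he) (fun f _ hfe => ?_) |>.trans ?_
  · rw [← mul_assoc, Xg_mul_Xe_diff R G e f (fun h => hfe h.symm), zero_mul]
  · rw [← mul_assoc, Xg_mul_Xe_same, Xv_mul_Xg]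

lemma pH_mul_pH_ne (v w : G.V) (hvw : v ≠ w) (hF : (FSet G H v).Finite)
    (hFw : (FSet G H w).Finite) :
    (∑ e ∈ hF.toFinset, Xe R G e * Xg R G e) * (∑ e ∈ hFw.toFinset, Xe R G e * Xg R G e)
      = 0 := by
  rw [Finset.sum_mul_sum]
  refine Finset.sum_eq_zero fun e he => Finset.sum_eq_zero fun f hf => ?_
  have h1 := (hF.mem_toFinset.mp he).1
  have h2 := (hFw.mem_toFinset.mp hf).1
  have hef : e ≠ f := fun h => hvw (by rw [← h1, ← h2, h])
  rw [mul_assoc, ← mul_assoc (Xg R G e), Xg_mul_Xe_diff R G e f hef, zero_mul, mul_zero]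

lemma Xv_mul_vH (v : G.V) (hF : (FSet G H v).Finite) :
    Xv R G v * vH R G H v = vH R G H v := by
  rw [vH_eq R G H v hF, mul_sub, Xv_mul_self, Xv_mul_pH R G H v hF]

lemma vH_mul_Xv (v : G.V) (hF : (FSet G H v).Finite) :
    vH R G H v * Xv R G v = vH R G H v := by
  rw [vH_eq R G H v hF, sub_mul, Xv_mul_self, pH_mul_Xv R G H v hF]

lemma vH_mul_vH (v : G.V) (hF : (FSet G H v).Finite) :
    vH R G H v * vH R G H v = vH R G H v := by
  rw [vH_eq R G H v hF, mul_sub, sub_mul, sub_mul, Xv_mul_self, Xv_mul_pH R G H v hF,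
    pH_mul_Xv R G H v hF, pH_mul_pH R G H v hF, sub_self, sub_zero]

lemma Xv_ne_mul_vH (v w : G.V) (hw : w ≠ v) (hF : (FSet G H v).Finite) :
    Xv R G w * vH R G H v = 0 := by
  rw [vH_eq R G H v hF, mul_sub, Xv_mul_Xv R G w v hw, Xv_ne_mul_pH R G H v w hw hF, sub_self]

lemma vH_mul_Xv_ne (v w : G.V) (hw : v ≠ w) (hF : (FSet G H v).Finite) :
    vH R G H v * Xv R G w = 0 := by
  rw [vH_eq R G H v hF, sub_mul, Xv_mul_Xv R G v w hw, pH_mul_Xv_ne R G H v w hw hF, sub_self]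

lemma vH_mul_Xe (v : G.V) (hF : (FSet G H v).Finite) (e : G.E) (he : e ∈ FSet G H v) :
    vH R G H v * Xe R G e = 0 := by
  rw [vH_eq R G H v hF, sub_mul, pH_mul_Xe R G H v hF e he, ← he.1, Xv_mul_Xe, sub_self]

lemma Xg_mul_vH (v : G.V) (hF : (FSet G H v).Finite) (e : G.E) (he : e ∈ FSet G H v) :
    Xg R G e * vH R G H v = 0 := by
  rw [vH_eq R G H v hF, mul_sub, Xg_mul_pH R G H v hF e he, ← he.1, Xg_mul_Xv, sub_self]

lemma vH_mul_vH_ne (v w : G.V) (hvw : v ≠ w) (hF : (FSet G H v).Finite)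
    (hFw : (FSet G H w).Finite) : vH R G H v * vH R G H w = 0 := by
  rw [vH_eq R G H v hF, vH_eq R G H w hFw, mul_sub, sub_mul, sub_mul,
    Xv_mul_Xv R G v w hvw, pH_mul_Xv_ne R G H v w hvw hF,
    Xv_ne_mul_pH R G H w v hvw hFw, pH_mul_pH_ne R G H v w hvw hF hFw]
  simp

end AuxLPA

section QuotCombinatorics

variable (R : Type) [CommRing R] (G : LPGraph) (H S : Set G.V) (hH : G.Hereditary H)

/-- The set of edges of the quotient graph emitted by `inl v`. -/
def EQ (u : G.V) (hu : u ∉ H) : Set (quotGraph G H S hH).E :=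
  {x : (quotGraph G H S hH).E | (quotGraph G H S hH).s x = Sum.inl ⟨u, hu⟩}

lemma mem_EQ_inl (u : G.V) (hu : u ∉ H) (a : {e : G.E // G.r e ∉ H}) :
    (Sum.inl a ∈ EQ G H S hH u hu) ↔ G.s a.1 = u := by
  constructor
  · intro h
    have h' : (⟨G.s a.1, fun hh => a.2 (hH a.1 hh)⟩ : {v : G.V // v ∉ H}) = ⟨u, hu⟩ :=
      Sum.inl.inj h
    exact congrArg Subtype.val h'
  · intro h
    show Sum.inl _ = Sum.inl _
    exact congrArg Sum.inl (Subtype.ext h)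

lemma mem_EQ_inr (u : G.V) (hu : u ∉ H) (b : {e : G.E // G.r e ∈ G.BH H ∧ G.r e ∉ S}) :
    (Sum.inr b ∈ EQ G H S hH u hu) ↔ G.s b.1 = u := by
  constructor
  · intro h
    have h' : (⟨G.s b.1, fun hh => b.2.1.1 (hH b.1 hh)⟩ : {v : G.V // v ∉ H}) = ⟨u, hu⟩ :=
      Sum.inl.inj h
    exact congrArg Subtype.val h'
  · intro h
    show Sum.inl _ = Sum.inl _
    exact congrArg Sum.inl (Subtype.ext h)

lemma FSet_subset_of_BH (u : G.V) :
    {e : G.E | G.s e = u ∧ (G.r e ∈ G.BH H ∧ G.r e ∉ S)} ⊆ FSet G H u :=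
  fun e he => ⟨he.1, he.2.1.1⟩

lemma EQ_finite (u : G.V) (hu : u ∉ H) (hF : (FSet G H u).Finite) :
    (EQ G H S hH u hu).Finite := by
  have hA : {a : {e : G.E // G.r e ∉ H} | G.s a.1 = u}.Finite := by
    have : {a : {e : G.E // G.r e ∉ H} | G.s a.1 = u}
        = Subtype.val ⁻¹' (FSet G H u) := by
      ext a; exact ⟨fun h => ⟨h, a.2⟩, fun h => h.1⟩
    rw [this]
    exact Set.Finite.preimage (Set.injOn_of_injective Subtype.val_injective) hF
  have hB : {b : {e : G.E // G.r e ∈ G.BH H ∧ G.r e ∉ S} | G.s b.1 = u}.Finite := by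
    have : {b : {e : G.E // G.r e ∈ G.BH H ∧ G.r e ∉ S} | G.s b.1 = u}
        = Subtype.val ⁻¹' (FSet G H u) := by
      ext b; exact ⟨fun h => ⟨h, b.2.1.1⟩, fun h => h.1⟩
    rw [this]
    exact Set.Finite.preimage (Set.injOn_of_injective Subtype.val_injective) hF
  refine Set.Finite.subset ((hA.image Sum.inl).union (hB.image Sum.inr)) ?_
  intro x hx
  cases x with
  | inl a => exact Or.inl ⟨a, (mem_EQ_inl G H S hH u hu a).mp hx, rfl⟩
  | inr b => exact Or.inr ⟨b, (mem_EQ_inr G H S hH u hu b).mp hx, rfl⟩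

lemma EQ_nonempty (u : G.V) (hu : u ∉ H) (hF : (FSet G H u).Nonempty) :
    (EQ G H S hH u hu).Nonempty := by
  obtain ⟨e, he⟩ := hF
  exact ⟨Sum.inl ⟨e, he.2⟩, (mem_EQ_inl G H S hH u hu ⟨e, he.2⟩).mpr he.1⟩

lemma FSet_finite_of_EQ (u : G.V) (hu : u ∉ H) (hQ : (EQ G H S hH u hu).Finite) :
    (FSet G H u).Finite := by
  refine Set.Finite.subset
    (hQ.image (Sum.elim (fun a => a.1) (fun b => b.1))) ?_
  intro e he
  exact ⟨Sum.inl ⟨e, he.2⟩, (mem_EQ_inl G H S hH u hu ⟨e, he.2⟩).mpr he.1, rfl⟩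

lemma FSet_nonempty_of_EQ (u : G.V) (hu : u ∉ H) (hQ : (EQ G H S hH u hu).Nonempty) :
    (FSet G H u).Nonempty := by
  obtain ⟨x, hx⟩ := hQ
  cases x with
  | inl a => exact ⟨a.1, (mem_EQ_inl G H S hH u hu a).mp hx, a.2⟩
  | inr b => exact ⟨b.1, (mem_EQ_inr G H S hH u hu b).mp hx, b.2.1.1⟩

lemma sumQ {M : Type} [AddCommMonoid M] (u : G.V) (hu : u ∉ H)
    (hQ : (EQ G H S hH u hu).Finite) (hF : (FSet G H u).Finite)
    (h : (quotGraph G H S hH).E → M) :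
    ∑ x ∈ hQ.toFinset, h x =
      ∑ e ∈ hF.toFinset,
        ((if he : G.r e ∉ H then h (Sum.inl ⟨e, he⟩) else 0) +
         (if he' : G.r e ∈ G.BH H ∧ G.r e ∉ S then h (Sum.inr ⟨e, he'⟩) else 0)) := by
  rw [Finset.sum_add_distrib]
  rw [← Finset.toLeft_disjSum_toRight (u := hQ.toFinset)]
  refine (Finset.sum_disjSum _ _ _).trans ?_
  congr 1
  · refine Finset.sum_bij' (i := fun (a : {e : G.E // G.r e ∉ H}) _ => (a : G.E))
      (j := fun e he => ⟨e, ((hF.mem_toFinset).1 he).2⟩) ?_ ?_ ?_ ?_ ?_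
    · intro a ha
      erw [Finset.mem_toLeft, Set.Finite.mem_toFinset] at ha
      exact hF.mem_toFinset.mpr ⟨(mem_EQ_inl G H S hH u hu a).mp ha, a.2⟩
    · intro e he
      erw [Finset.mem_toLeft, Set.Finite.mem_toFinset]
      exact (mem_EQ_inl G H S hH u hu _).mpr ((hF.mem_toFinset.1 he).1)
    · intro a ha; rfl
    · intro e he; rfl
    · intro a ha
      rw [dif_pos a.2]
  · have hF' : {e : G.E | G.s e = u ∧ (G.r e ∈ G.BH H ∧ G.r e ∉ S)}.Finite :=
      hF.subset (FSet_subset_of_BH G H S u)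
    have hsub : hF'.toFinset ⊆ hF.toFinset := by
      intro e he
      rw [Set.Finite.mem_toFinset] at *
      exact FSet_subset_of_BH G H S u he
    rw [← Finset.sum_subset hsub (fun e _ he' => ?_)]
    · refine Finset.sum_bij'
        (i := fun (b : {e : G.E // G.r e ∈ G.BH H ∧ G.r e ∉ S}) _ => (b : G.E))
        (j := fun e he => ⟨e, ((hF'.mem_toFinset).1 he).2⟩) ?_ ?_ ?_ ?_ ?_
      · intro b hb
        erw [Finset.mem_toRight, Set.Finite.mem_toFinset] at hb
        exact hF'.mem_toFinset.mpr ⟨(mem_EQ_inr G H S hH u hu b).mp hb, b.2⟩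
      · intro e he
        erw [Finset.mem_toRight, Set.Finite.mem_toFinset]
        exact (mem_EQ_inr G H S hH u hu _).mpr ((hF'.mem_toFinset.1 he).1)
      · intro b hb; rfl
      · intro e he; rfl
      · intro b hb
        rw [dif_pos b.2]
    · rw [dif_neg]
      intro hc
      exact he' (hF'.mem_toFinset.mpr ⟨(hF.mem_toFinset.1 ‹_›).1, hc⟩)

end QuotCombinatorics

section PhiDef

variable (R : Type) [CommRing R] (G : LPGraph) (H S : Set G.V) (hH : G.Hereditary H)

noncomputable def phiV (v : G.V) : LPA R (quotGraph G H S hH) :=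
  if hv : v ∈ H then 0 else
    Xv R (quotGraph G H S hH) (Sum.inl ⟨v, hv⟩) +
      (if hv' : v ∈ G.BH H ∧ v ∉ S then Xv R (quotGraph G H S hH) (Sum.inr ⟨v, hv'⟩) else 0)

noncomputable def phiE (e : G.E) : LPA R (quotGraph G H S hH) :=
  if he : G.r e ∉ H then
    Xe R (quotGraph G H S hH) (Sum.inl ⟨e, he⟩) +
      (if he' : G.r e ∈ G.BH H ∧ G.r e ∉ S then
        Xe R (quotGraph G H S hH) (Sum.inr ⟨e, he'⟩) else 0)
  else 0

noncomputable def phiG (e : G.E) : LPA R (quotGraph G H S hH) :=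
  if he : G.r e ∉ H then
    Xg R (quotGraph G H S hH) (Sum.inl ⟨e, he⟩) +
      (if he' : G.r e ∈ G.BH H ∧ G.r e ∉ S then
        Xg R (quotGraph G H S hH) (Sum.inr ⟨e, he'⟩) else 0)
  else 0

lemma phiV_idem (v : G.V) : phiV R G H S hH v * phiV R G H S hH v = phiV R G H S hH v := by
  rw [phiV]
  by_cases hv : v ∈ H
  · rw [dif_pos hv, mul_zero]
  · rw [dif_neg hv]
    by_cases hv' : v ∈ G.BH H ∧ v ∉ S
    · rw [dif_pos hv']
      have h1 := Xv_mul_self R (quotGraph G H S hH) (Sum.inl ⟨v, hv⟩)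
      have h2 := Xv_mul_self R (quotGraph G H S hH) (Sum.inr ⟨v, hv'⟩)
      have h3 : Xv R (quotGraph G H S hH) (Sum.inl ⟨v, hv⟩) *
          Xv R (quotGraph G H S hH) (Sum.inr ⟨v, hv'⟩) = 0 :=
        Xv_mul_Xv R _ _ _ (Sum.inl_ne_inr)
      have h4 : Xv R (quotGraph G H S hH) (Sum.inr ⟨v, hv'⟩) *
          Xv R (quotGraph G H S hH) (Sum.inl ⟨v, hv⟩) = 0 :=
        Xv_mul_Xv R _ _ _ (Sum.inr_ne_inl)
      rw [mul_add, add_mul, add_mul, h1, h2, h3, h4, zero_add, add_zero]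
    · erw [dif_neg hv', add_zero, Xv_mul_self]

lemma phiV_orth (v w : G.V) (hvw : v ≠ w) :
    phiV R G H S hH v * phiV R G H S hH w = 0 := by
  rw [phiV, phiV]
  by_cases hv : v ∈ H
  · rw [dif_pos hv, zero_mul]
  by_cases hw : w ∈ H
  · rw [dif_pos hw, mul_zero]
  rw [dif_neg hv, dif_neg hw]
  have hll : Xv R (quotGraph G H S hH) (Sum.inl ⟨v, hv⟩) *
      Xv R (quotGraph G H S hH) (Sum.inl ⟨w, hw⟩) = 0 :=
    Xv_mul_Xv R _ _ _ (fun hc => hvw (congrArg (Sum.elim Subtype.val Subtype.val) hc))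
  by_cases hv' : v ∈ G.BH H ∧ v ∉ S <;> by_cases hw' : w ∈ G.BH H ∧ w ∉ S
  · rw [dif_pos hv', dif_pos hw']
    have hlr : Xv R (quotGraph G H S hH) (Sum.inl ⟨v, hv⟩) *
        Xv R (quotGraph G H S hH) (Sum.inr ⟨w, hw'⟩) = 0 := Xv_mul_Xv R _ _ _ Sum.inl_ne_inr
    have hrl : Xv R (quotGraph G H S hH) (Sum.inr ⟨v, hv'⟩) *
        Xv R (quotGraph G H S hH) (Sum.inl ⟨w, hw⟩) = 0 := Xv_mul_Xv R _ _ _ Sum.inr_ne_inl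
    have hrr : Xv R (quotGraph G H S hH) (Sum.inr ⟨v, hv'⟩) *
        Xv R (quotGraph G H S hH) (Sum.inr ⟨w, hw'⟩) = 0 :=
      Xv_mul_Xv R _ _ _ (fun hc => hvw (congrArg (Sum.elim Subtype.val Subtype.val) hc))
    rw [mul_add, add_mul, add_mul, hll, hlr, hrl, hrr]
    simp
  · rw [dif_pos hv', dif_neg hw', add_zero, add_mul, hll]
    have hrl : Xv R (quotGraph G H S hH) (Sum.inr ⟨v, hv'⟩) *
        Xv R (quotGraph G H S hH) (Sum.inl ⟨w, hw⟩) = 0 := Xv_mul_Xv R _ _ _ Sum.inr_ne_inl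
    rw [hrl, add_zero]
  · rw [dif_neg hv', dif_pos hw', add_zero, mul_add, hll]
    have hlr : Xv R (quotGraph G H S hH) (Sum.inl ⟨v, hv⟩) *
        Xv R (quotGraph G H S hH) (Sum.inr ⟨w, hw'⟩) = 0 := Xv_mul_Xv R _ _ _ Sum.inl_ne_inr
    rw [hlr, add_zero]
  · rw [dif_neg hv', dif_neg hw', add_zero, add_zero, hll]

lemma phiV_src_mul_phiE (e : G.E) :
    phiV R G H S hH (G.s e) * phiE R G H S hH e = phiE R G H S hH e := by
  rw [phiV, phiE]
  by_cases he : G.r e ∉ H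
  · have hs : G.s e ∉ H := fun h => he (hH e h)
    rw [dif_neg hs, dif_pos he]
    have h1 : Xv R (quotGraph G H S hH) (Sum.inl ⟨G.s e, hs⟩) *
        Xe R (quotGraph G H S hH) (Sum.inl ⟨e, he⟩)
        = Xe R (quotGraph G H S hH) (Sum.inl ⟨e, he⟩) :=
      Xv_mul_Xe R (quotGraph G H S hH) (Sum.inl ⟨e, he⟩)
    by_cases he' : G.r e ∈ G.BH H ∧ G.r e ∉ S
    · rw [dif_pos he']
      have h2 : Xv R (quotGraph G H S hH) (Sum.inl ⟨G.s e, hs⟩) *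
          Xe R (quotGraph G H S hH) (Sum.inr ⟨e, he'⟩)
          = Xe R (quotGraph G H S hH) (Sum.inr ⟨e, he'⟩) :=
        Xv_mul_Xe R (quotGraph G H S hH) (Sum.inr ⟨e, he'⟩)
      by_cases hs' : G.s e ∈ G.BH H ∧ G.s e ∉ S
      · rw [dif_pos hs']
        have h3 : Xv R (quotGraph G H S hH) (Sum.inr ⟨G.s e, hs'⟩) *
            Xe R (quotGraph G H S hH) (Sum.inl ⟨e, he⟩) = 0 :=
          Xv_mul_Xe_ne R (quotGraph G H S hH) _ _ Sum.inr_ne_inl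
        have h4 : Xv R (quotGraph G H S hH) (Sum.inr ⟨G.s e, hs'⟩) *
            Xe R (quotGraph G H S hH) (Sum.inr ⟨e, he'⟩) = 0 :=
          Xv_mul_Xe_ne R (quotGraph G H S hH) _ _ Sum.inr_ne_inl
        rw [mul_add, add_mul, add_mul, h1, h2, h3, h4, add_zero, add_zero]
      · rw [dif_neg hs', add_zero, mul_add, h1, h2]
    · rw [dif_neg he', add_zero]
      by_cases hs' : G.s e ∈ G.BH H ∧ G.s e ∉ S
      · rw [dif_pos hs']
        have h3 : Xv R (quotGraph G H S hH) (Sum.inr ⟨G.s e, hs'⟩) *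
            Xe R (quotGraph G H S hH) (Sum.inl ⟨e, he⟩) = 0 :=
          Xv_mul_Xe_ne R (quotGraph G H S hH) _ _ Sum.inr_ne_inl
        rw [add_mul, h1, h3, add_zero]
      · rw [dif_neg hs', add_zero, h1]
  · rw [dif_neg he, mul_zero]

lemma phiE_mul_phiV_rng (e : G.E) :
    phiE R G H S hH e * phiV R G H S hH (G.r e) = phiE R G H S hH e := by
  rw [phiV, phiE]
  by_cases he : G.r e ∉ H
  · rw [dif_neg he, dif_pos he]
    have h1 : Xe R (quotGraph G H S hH) (Sum.inl ⟨e, he⟩) *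
        Xv R (quotGraph G H S hH) (Sum.inl ⟨G.r e, he⟩)
        = Xe R (quotGraph G H S hH) (Sum.inl ⟨e, he⟩) :=
      Xe_mul_Xv R (quotGraph G H S hH) (Sum.inl ⟨e, he⟩)
    by_cases he' : G.r e ∈ G.BH H ∧ G.r e ∉ S
    · rw [dif_pos he', dif_pos he']
      have h2 : Xe R (quotGraph G H S hH) (Sum.inl ⟨e, he⟩) *
          Xv R (quotGraph G H S hH) (Sum.inr ⟨G.r e, he'⟩) = 0 :=
        Xe_mul_Xv_ne R (quotGraph G H S hH) _ _ Sum.inl_ne_inr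
      have h3 : Xe R (quotGraph G H S hH) (Sum.inr ⟨e, he'⟩) *
          Xv R (quotGraph G H S hH) (Sum.inl ⟨G.r e, he⟩) = 0 :=
        Xe_mul_Xv_ne R (quotGraph G H S hH) _ _ Sum.inr_ne_inl
      have h4 : Xe R (quotGraph G H S hH) (Sum.inr ⟨e, he'⟩) *
          Xv R (quotGraph G H S hH) (Sum.inr ⟨G.r e, he'⟩)
          = Xe R (quotGraph G H S hH) (Sum.inr ⟨e, he'⟩) :=
        Xe_mul_Xv R (quotGraph G H S hH) (Sum.inr ⟨e, he'⟩)
      rw [mul_add, add_mul, add_mul, h1, h2, h3, h4, add_zero, zero_add]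
    · rw [dif_neg he', dif_neg he', add_zero, add_zero, h1]
  · rw [dif_neg he, zero_mul]

lemma phiV_rng_mul_phiG (e : G.E) :
    phiV R G H S hH (G.r e) * phiG R G H S hH e = phiG R G H S hH e := by
  rw [phiV, phiG]
  by_cases he : G.r e ∉ H
  · rw [dif_neg he, dif_pos he]
    have h1 : Xv R (quotGraph G H S hH) (Sum.inl ⟨G.r e, he⟩) *
        Xg R (quotGraph G H S hH) (Sum.inl ⟨e, he⟩)
        = Xg R (quotGraph G H S hH) (Sum.inl ⟨e, he⟩) :=
      Xv_mul_Xg R (quotGraph G H S hH) (Sum.inl ⟨e, he⟩)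
    by_cases he' : G.r e ∈ G.BH H ∧ G.r e ∉ S
    · rw [dif_pos he', dif_pos he']
      have h2 : Xv R (quotGraph G H S hH) (Sum.inl ⟨G.r e, he⟩) *
          Xg R (quotGraph G H S hH) (Sum.inr ⟨e, he'⟩) = 0 :=
        Xv_mul_Xg_ne R (quotGraph G H S hH) _ _ Sum.inl_ne_inr
      have h3 : Xv R (quotGraph G H S hH) (Sum.inr ⟨G.r e, he'⟩) *
          Xg R (quotGraph G H S hH) (Sum.inl ⟨e, he⟩) = 0 :=
        Xv_mul_Xg_ne R (quotGraph G H S hH) _ _ Sum.inr_ne_inl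
      have h4 : Xv R (quotGraph G H S hH) (Sum.inr ⟨G.r e, he'⟩) *
          Xg R (quotGraph G H S hH) (Sum.inr ⟨e, he'⟩)
          = Xg R (quotGraph G H S hH) (Sum.inr ⟨e, he'⟩) :=
        Xv_mul_Xg R (quotGraph G H S hH) (Sum.inr ⟨e, he'⟩)
      rw [mul_add, add_mul, add_mul, h1, h2, h3, h4, add_zero, zero_add]
    · rw [dif_neg he', dif_neg he', add_zero, add_zero, h1]
  · rw [dif_neg he, mul_zero]

lemma phiG_mul_phiV_src (e : G.E) :
    phiG R G H S hH e * phiV R G H S hH (G.s e) = phiG R G H S hH e := by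
  rw [phiV, phiG]
  by_cases he : G.r e ∉ H
  · have hs : G.s e ∉ H := fun h => he (hH e h)
    rw [dif_neg hs, dif_pos he]
    have h1 : Xg R (quotGraph G H S hH) (Sum.inl ⟨e, he⟩) *
        Xv R (quotGraph G H S hH) (Sum.inl ⟨G.s e, hs⟩)
        = Xg R (quotGraph G H S hH) (Sum.inl ⟨e, he⟩) :=
      Xg_mul_Xv R (quotGraph G H S hH) (Sum.inl ⟨e, he⟩)
    by_cases he' : G.r e ∈ G.BH H ∧ G.r e ∉ S
    · rw [dif_pos he']
      have h2 : Xg R (quotGraph G H S hH) (Sum.inr ⟨e, he'⟩) *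
          Xv R (quotGraph G H S hH) (Sum.inl ⟨G.s e, hs⟩)
          = Xg R (quotGraph G H S hH) (Sum.inr ⟨e, he'⟩) :=
        Xg_mul_Xv R (quotGraph G H S hH) (Sum.inr ⟨e, he'⟩)
      by_cases hs' : G.s e ∈ G.BH H ∧ G.s e ∉ S
      · rw [dif_pos hs']
        have h3 : Xg R (quotGraph G H S hH) (Sum.inl ⟨e, he⟩) *
            Xv R (quotGraph G H S hH) (Sum.inr ⟨G.s e, hs'⟩) = 0 :=
          Xg_mul_Xv_ne R (quotGraph G H S hH) _ _ Sum.inl_ne_inr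
        have h4 : Xg R (quotGraph G H S hH) (Sum.inr ⟨e, he'⟩) *
            Xv R (quotGraph G H S hH) (Sum.inr ⟨G.s e, hs'⟩) = 0 :=
          Xg_mul_Xv_ne R (quotGraph G H S hH) _ _ Sum.inl_ne_inr
        rw [mul_add, add_mul, add_mul, h1, h2, h3, h4]
        simp
      · rw [dif_neg hs', add_zero, add_mul, h1, h2]
    · rw [dif_neg he', add_zero]
      by_cases hs' : G.s e ∈ G.BH H ∧ G.s e ∉ S
      · rw [dif_pos hs']
        have h3 : Xg R (quotGraph G H S hH) (Sum.inl ⟨e, he⟩) *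
            Xv R (quotGraph G H S hH) (Sum.inr ⟨G.s e, hs'⟩) = 0 :=
          Xg_mul_Xv_ne R (quotGraph G H S hH) _ _ Sum.inl_ne_inr
        rw [mul_add, h1, h3, add_zero]
      · rw [dif_neg hs', add_zero, h1]
  · rw [dif_neg he, zero_mul]

lemma phiG_mul_phiE_same (e : G.E) :
    phiG R G H S hH e * phiE R G H S hH e = phiV R G H S hH (G.r e) := by
  rw [phiV, phiE, phiG]
  by_cases he : G.r e ∉ H
  · rw [dif_neg he, dif_pos he, dif_pos he]
    have h1 : Xg R (quotGraph G H S hH) (Sum.inl ⟨e, he⟩) *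
        Xe R (quotGraph G H S hH) (Sum.inl ⟨e, he⟩)
        = Xv R (quotGraph G H S hH) (Sum.inl ⟨G.r e, he⟩) :=
      Xg_mul_Xe_same R (quotGraph G H S hH) (Sum.inl ⟨e, he⟩)
    by_cases he' : G.r e ∈ G.BH H ∧ G.r e ∉ S
    · rw [dif_pos he', dif_pos he', dif_pos he']
      have h2 : Xg R (quotGraph G H S hH) (Sum.inl ⟨e, he⟩) *
          Xe R (quotGraph G H S hH) (Sum.inr ⟨e, he'⟩) = 0 :=
        Xg_mul_Xe_diff R (quotGraph G H S hH) _ _ Sum.inl_ne_inr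
      have h3 : Xg R (quotGraph G H S hH) (Sum.inr ⟨e, he'⟩) *
          Xe R (quotGraph G H S hH) (Sum.inl ⟨e, he⟩) = 0 :=
        Xg_mul_Xe_diff R (quotGraph G H S hH) _ _ Sum.inr_ne_inl
      have h4 : Xg R (quotGraph G H S hH) (Sum.inr ⟨e, he'⟩) *
          Xe R (quotGraph G H S hH) (Sum.inr ⟨e, he'⟩)
          = Xv R (quotGraph G H S hH) (Sum.inr ⟨G.r e, he'⟩) :=
        Xg_mul_Xe_same R (quotGraph G H S hH) (Sum.inr ⟨e, he'⟩)
      rw [mul_add, add_mul, add_mul, h1, h2, h3, h4, add_zero, zero_add]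
    · rw [dif_neg he', dif_neg he', dif_neg he', add_zero, add_zero, h1, add_zero]
  · rw [dif_neg he, dif_neg he, dif_pos (not_not.mp he), zero_mul]

lemma phiG_mul_phiE_diff (e f : G.E) (hef : e ≠ f) :
    phiG R G H S hH e * phiE R G H S hH f = 0 := by
  rw [phiE, phiG]
  by_cases he : G.r e ∉ H
  · by_cases hf : G.r f ∉ H
    · rw [dif_pos he, dif_pos hf]
      have h1 : Xg R (quotGraph G H S hH) (Sum.inl ⟨e, he⟩) *
          Xe R (quotGraph G H S hH) (Sum.inl ⟨f, hf⟩) = 0 :=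
        Xg_mul_Xe_diff R (quotGraph G H S hH) _ _
          (fun hc => hef (congrArg (Sum.elim Subtype.val Subtype.val) hc))
      by_cases he' : G.r e ∈ G.BH H ∧ G.r e ∉ S <;>
        by_cases hf' : G.r f ∈ G.BH H ∧ G.r f ∉ S
      · rw [dif_pos he', dif_pos hf']
        have h2 : Xg R (quotGraph G H S hH) (Sum.inl ⟨e, he⟩) *
            Xe R (quotGraph G H S hH) (Sum.inr ⟨f, hf'⟩) = 0 :=
          Xg_mul_Xe_diff R (quotGraph G H S hH) _ _ Sum.inl_ne_inr
        have h3 : Xg R (quotGraph G H S hH) (Sum.inr ⟨e, he'⟩) *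
            Xe R (quotGraph G H S hH) (Sum.inl ⟨f, hf⟩) = 0 :=
          Xg_mul_Xe_diff R (quotGraph G H S hH) _ _ Sum.inr_ne_inl
        have h4 : Xg R (quotGraph G H S hH) (Sum.inr ⟨e, he'⟩) *
            Xe R (quotGraph G H S hH) (Sum.inr ⟨f, hf'⟩) = 0 :=
          Xg_mul_Xe_diff R (quotGraph G H S hH) _ _
            (fun hc => hef (congrArg (Sum.elim Subtype.val Subtype.val) hc))
        rw [mul_add, add_mul, add_mul, h1, h2, h3, h4]
        simp
      · rw [dif_pos he', dif_neg hf', add_zero, add_mul, h1]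
        have h3 : Xg R (quotGraph G H S hH) (Sum.inr ⟨e, he'⟩) *
            Xe R (quotGraph G H S hH) (Sum.inl ⟨f, hf⟩) = 0 :=
          Xg_mul_Xe_diff R (quotGraph G H S hH) _ _ Sum.inr_ne_inl
        rw [h3, add_zero]
      · rw [dif_neg he', dif_pos hf', add_zero, mul_add, h1]
        have h2 : Xg R (quotGraph G H S hH) (Sum.inl ⟨e, he⟩) *
            Xe R (quotGraph G H S hH) (Sum.inr ⟨f, hf'⟩) = 0 :=
          Xg_mul_Xe_diff R (quotGraph G H S hH) _ _ Sum.inl_ne_inr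
        rw [h2, add_zero]
      · rw [dif_neg he', dif_neg hf', add_zero, add_zero, h1]
    · rw [dif_neg hf, mul_zero]
  · rw [dif_neg he, zero_mul]

end PhiDef

section PhiCk2

variable (R : Type) [CommRing R] (G : LPGraph) (H S : Set G.V) (hH : G.Hereditary H)

lemma phiE_mul_phiG_eq (e : G.E) :
    phiE R G H S hH e * phiG R G H S hH e =
      (if he : G.r e ∉ H then
        Xe R (quotGraph G H S hH) (Sum.inl ⟨e, he⟩) *
          Xg R (quotGraph G H S hH) (Sum.inl ⟨e, he⟩) else 0) +
      (if he' : G.r e ∈ G.BH H ∧ G.r e ∉ S then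
        Xe R (quotGraph G H S hH) (Sum.inr ⟨e, he'⟩) *
          Xg R (quotGraph G H S hH) (Sum.inr ⟨e, he'⟩) else 0) := by
  rw [phiE, phiG]
  by_cases he : G.r e ∉ H
  · rw [dif_pos he, dif_pos he, dif_pos he]
    by_cases he' : G.r e ∈ G.BH H ∧ G.r e ∉ S
    · rw [dif_pos he', dif_pos he', dif_pos he']
      have h2 : Xe R (quotGraph G H S hH) (Sum.inl ⟨e, he⟩) *
          Xg R (quotGraph G H S hH) (Sum.inr ⟨e, he'⟩) = 0 :=
        Xe_mul_Xg_ne R (quotGraph G H S hH) _ _ Sum.inl_ne_inr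
      have h3 : Xe R (quotGraph G H S hH) (Sum.inr ⟨e, he'⟩) *
          Xg R (quotGraph G H S hH) (Sum.inl ⟨e, he⟩) = 0 :=
        Xe_mul_Xg_ne R (quotGraph G H S hH) _ _ Sum.inr_ne_inl
      rw [mul_add, add_mul, add_mul, h2, h3]
      simp
    · rw [dif_neg he', dif_neg he', dif_neg he']
      simp
  · rw [dif_neg he, dif_neg he, dif_neg he, zero_mul, zero_add]
    rw [dif_neg (fun hc : G.r e ∈ G.BH H ∧ G.r e ∉ S => he (fun hm => hc.1.1 hm))]

lemma phi_ck2 (hS : G.Saturated H) (v : G.V) (h1 : {e : G.E | G.s e = v}.Finite)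
    (h2 : {e : G.E | G.s e = v}.Nonempty) :
    phiV R G H S hH v = ∑ e ∈ h1.toFinset, phiE R G H S hH e * phiG R G H S hH e := by
  by_cases hv : v ∈ H
  · rw [phiV, dif_pos hv]
    refine (Finset.sum_eq_zero fun e he => ?_).symm
    have hse := h1.mem_toFinset.mp he
    have hre : G.r e ∈ H := hH e (by rw [hse]; exact hv)
    rw [phiE, dif_neg (not_not_intro hre), zero_mul]
  · have hF : (FSet G H v).Finite := h1.subset (fun e he => he.1)
    have hFne : (FSet G H v).Nonempty := by
      by_contra hemp
      refine hv (hS v h1 h2 fun e hse => ?_)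
      by_contra hre
      exact hemp ⟨e, hse, hre⟩
    have hvBH : v ∉ G.BH H := fun hb => hb.2.1 h1
    have hQfin : (EQ G H S hH v hv).Finite := EQ_finite G H S hH v hv hF
    have hQne : (EQ G H S hH v hv).Nonempty := EQ_nonempty G H S hH v hv hFne
    rw [phiV, dif_neg hv, dif_neg (fun hc : v ∈ G.BH H ∧ v ∉ S => hvBH hc.1), add_zero]
    rw [Xv_ck2 R (quotGraph G H S hH) (Sum.inl ⟨v, hv⟩) hQfin hQne]
    erw [sumQ G H S hH v hv hQfin hF
      (fun x => Xe R (quotGraph G H S hH) x * Xg R (quotGraph G H S hH) x)]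
    refine (Finset.sum_congr rfl fun e _ => (phiE_mul_phiG_eq R G H S hH e).symm).trans ?_
    exact Finset.sum_subset (fun e he => h1.mem_toFinset.mpr (hF.mem_toFinset.mp he).1)
      (fun e he hne => by
        have hre : ¬ G.r e ∉ H := fun hre =>
          hne (hF.mem_toFinset.mpr ⟨h1.mem_toFinset.mp he, hre⟩)
        rw [phiE, dif_neg hre, zero_mul])

end PhiCk2

section PhiHom

variable (R : Type) [CommRing R] (G : LPGraph) (H S : Set G.V) (hH : G.Hereditary H)

noncomputable def phi0 : FreeAlgebra R (LGen G) →ₐ[R] LPA R (quotGraph G H S hH) :=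
  FreeAlgebra.lift R fun x => match x with
    | LGen.vertex v => phiV R G H S hH v
    | LGen.edge e => phiE R G H S hH e
    | LGen.ghost e => phiG R G H S hH e

lemma phi0_fv (v : G.V) : phi0 R G H S hH (fv R G v) = phiV R G H S hH v := by
  rw [phi0, fv, FreeAlgebra.lift_ι_apply]

lemma phi0_fe (e : G.E) : phi0 R G H S hH (fe R G e) = phiE R G H S hH e := by
  rw [phi0, fe, FreeAlgebra.lift_ι_apply]

lemma phi0_fg (e : G.E) : phi0 R G H S hH (fg R G e) = phiG R G H S hH e := by
  rw [phi0, fg, FreeAlgebra.lift_ι_apply]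

/-- The canonical projection onto the quotient by `I(H,S)`. -/
noncomputable def piQ : LPA R G →ₐ[R] QuotLPA R G (IHS R G H S) :=
  RingQuot.mkAlgHom R _

lemma piQ_eq_of_mem {x y : LPA R G} (hxy : x - y ∈ IHS R G H S) :
    piQ R G H S x = piQ R G H S y :=
  RingQuot.mkAlgHom_rel R hxy

lemma piQ_Xv_of_mem (v : G.V) (hv : v ∈ H) : piQ R G H S (Xv R G v) = 0 := by
  have : piQ R G H S (Xv R G v) = piQ R G H S 0 :=
    piQ_eq_of_mem R G H S (by
      rw [sub_zero]
      exact TwoSidedIdeal.subset_span (Or.inl ⟨v, hv, rfl⟩))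
  rw [this, map_zero]

lemma piQ_vH_of_mem (v : G.V) (hv : v ∈ S) : piQ R G H S (vH R G H v) = 0 := by
  have : piQ R G H S (vH R G H v) = piQ R G H S 0 :=
    piQ_eq_of_mem R G H S (by
      rw [sub_zero]
      exact TwoSidedIdeal.subset_span (Or.inr ⟨v, hv, rfl⟩))
  rw [this, map_zero]

variable (hS : G.Saturated H)
include hS

lemma phi0_rel : ∀ ⦃a b : FreeAlgebra R (LGen G)⦄, LRel R G a b →
    phi0 R G H S hH a = phi0 R G H S hH b := by
  intro a b h
  induction h with
  | idem v => rw [map_mul, phi0_fv, phiV_idem]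
  | orth v w hvw => rw [map_mul, phi0_fv, phi0_fv, phiV_orth R G H S hH v w hvw, map_zero]
  | edge_src e => rw [map_mul, phi0_fv, phi0_fe, phiV_src_mul_phiE]
  | edge_rng e => rw [map_mul, phi0_fv, phi0_fe, phiE_mul_phiV_rng]
  | ghost_rng e => rw [map_mul, phi0_fv, phi0_fg, phiV_rng_mul_phiG]
  | ghost_src e => rw [map_mul, phi0_fv, phi0_fg, phiG_mul_phiV_src]
  | ck1_same e => rw [map_mul, phi0_fv, phi0_fe, phi0_fg, phiG_mul_phiE_same]
  | ck1_diff e f hef =>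
      rw [map_mul, phi0_fe, phi0_fg, phiG_mul_phiE_diff R G H S hH e f hef, map_zero]
  | ck2 v h1 h2 =>
      rw [phi0_fv, map_sum, phi_ck2 R G H S hH hS v h1 h2]
      exact Finset.sum_congr rfl fun e _ => by rw [map_mul, phi0_fe, phi0_fg]

noncomputable def Phi : LPA R G →ₐ[R] LPA R (quotGraph G H S hH) :=
  RingQuot.liftAlgHom R ⟨phi0 R G H S hH, phi0_rel R G H S hH hS⟩

lemma Phi_Xv (v : G.V) : Phi R G H S hH hS (Xv R G v) = phiV R G H S hH v := by
  rw [Phi, Xv, RingQuot.liftAlgHom_mkAlgHom_apply, phi0_fv]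

lemma Phi_Xe (e : G.E) : Phi R G H S hH hS (Xe R G e) = phiE R G H S hH e := by
  rw [Phi, Xe, RingQuot.liftAlgHom_mkAlgHom_apply, phi0_fe]

lemma Phi_Xg (e : G.E) : Phi R G H S hH hS (Xg R G e) = phiG R G H S hH e := by
  rw [Phi, Xg, RingQuot.liftAlgHom_mkAlgHom_apply, phi0_fg]

lemma Phi_vH (v : G.V) (hvB : v ∈ G.BH H) :
    Phi R G H S hH hS (vH R G H v) =
      if hv' : v ∈ G.BH H ∧ v ∉ S then
        Xv R (quotGraph G H S hH) (Sum.inr ⟨v, hv'⟩) else 0 := by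
  have hv : v ∉ H := hvB.1
  have hF : (FSet G H v).Finite := hvB.2.2.1
  have hFne : (FSet G H v).Nonempty := hvB.2.2.2
  have hQfin : (EQ G H S hH v hv).Finite := EQ_finite G H S hH v hv hF
  have hQne : (EQ G H S hH v hv).Nonempty := EQ_nonempty G H S hH v hv hFne
  rw [vH_eq R G H v hF, map_sub, map_sum, Phi_Xv]
  have hsum : ∑ e ∈ hF.toFinset, Phi R G H S hH hS (Xe R G e * Xg R G e)
      = Xv R (quotGraph G H S hH) (Sum.inl ⟨v, hv⟩) := by
    rw [Xv_ck2 R (quotGraph G H S hH) (Sum.inl ⟨v, hv⟩) hQfin hQne]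
    erw [sumQ G H S hH v hv hQfin hF
      (fun x => Xe R (quotGraph G H S hH) x * Xg R (quotGraph G H S hH) x)]
    exact Finset.sum_congr rfl fun e _ => by
      rw [map_mul, Phi_Xe, Phi_Xg, phiE_mul_phiG_eq]
  rw [hsum, phiV, dif_neg hv, add_sub_cancel_left]

lemma Phi_eq_of_sub_mem (hSB : S ⊆ G.BH H) {a b : LPA R G}
    (hab : a - b ∈ IHS R G H S) : Phi R G H S hH hS a = Phi R G H S hH hS b := by
  rw [← sub_eq_zero, ← map_sub]
  have hker : a - b ∈ TwoSidedIdeal.ker (Phi R G H S hH hS).toRingHom := by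
    refine TwoSidedIdeal.mem_span_iff.mp hab _ ?_
    rintro x (⟨v, hv, rfl⟩ | ⟨v, hv, rfl⟩) <;> rw [SetLike.mem_coe, TwoSidedIdeal.mem_ker]
    · show Phi R G H S hH hS (Xv R G v) = 0
      rw [Phi_Xv, phiV, dif_pos hv]
    · show Phi R G H S hH hS (vH R G H v) = 0
      rw [Phi_vH R G H S hH hS v (hSB hv), dif_neg (fun hc => hc.2 hv)]
  exact (TwoSidedIdeal.mem_ker _).mp hker

/-- The induced map on the quotient. -/
noncomputable def PhiQ (hSB : S ⊆ G.BH H) :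
    QuotLPA R G (IHS R G H S) →ₐ[R] LPA R (quotGraph G H S hH) :=
  RingQuot.liftAlgHom R ⟨Phi R G H S hH hS, fun _ _ hab => Phi_eq_of_sub_mem R G H S hH hS hSB hab⟩

lemma PhiQ_piQ (hSB : S ⊆ G.BH H) (x : LPA R G) :
    PhiQ R G H S hH hS hSB (piQ R G H S x) = Phi R G H S hH hS x := by
  rw [PhiQ, piQ, RingQuot.liftAlgHom_mkAlgHom_apply]

end PhiHom

section AuxLPA2

variable (R : Type) [CommRing R] (G : LPGraph) (H : Set G.V)

-- `(vH w * Xg e) * (Xe e * vH w) = vH w` for `w = r e`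
lemma vHg_mul_evH (e : G.E) (hF : (FSet G H (G.r e)).Finite) :
    (vH R G H (G.r e) * Xg R G e) * (Xe R G e * vH R G H (G.r e)) = vH R G H (G.r e) := by
  rw [mul_assoc, ← mul_assoc (Xg R G e), Xg_mul_Xe_same, Xv_mul_vH R G H _ hF,
    vH_mul_vH R G H _ hF]

lemma g_mul_evH (e : G.E) (hF : (FSet G H (G.r e)).Finite) :
    Xg R G e * (Xe R G e * vH R G H (G.r e)) = vH R G H (G.r e) := by
  rw [← mul_assoc, Xg_mul_Xe_same, Xv_mul_vH R G H _ hF]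

lemma vHg_mul_e (e : G.E) (hF : (FSet G H (G.r e)).Finite) :
    (vH R G H (G.r e) * Xg R G e) * Xe R G e = vH R G H (G.r e) := by
  rw [mul_assoc, Xg_mul_Xe_same, vH_mul_Xv R G H _ hF]

lemma vH_mul_evH (v : G.V) (hFv : (FSet G H v).Finite) (e : G.E) (he : e ∈ FSet G H v)
    (x : LPA R G) : vH R G H v * (Xe R G e * x) = 0 := by
  rw [← mul_assoc, vH_mul_Xe R G H v hFv e he, zero_mul]

lemma xg_mul_vH_mul (v : G.V) (hFv : (FSet G H v).Finite) (e : G.E) (he : e ∈ FSet G H v)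
    (x : LPA R G) : (x * Xg R G e) * vH R G H v = 0 := by
  rw [mul_assoc, Xg_mul_vH R G H v hFv e he, mul_zero]

lemma g_mul_e_diff (e f : G.E) (hef : e ≠ f) (x y : LPA R G) :
    (x * Xg R G e) * (Xe R G f * y) = 0 := by
  rw [mul_assoc, ← mul_assoc (Xg R G e), Xg_mul_Xe_diff R G e f hef, zero_mul, mul_zero]

lemma evH_mul_vH (e : G.E) (hF : (FSet G H (G.r e)).Finite) :
    (Xe R G e * vH R G H (G.r e)) * vH R G H (G.r e) = Xe R G e * vH R G H (G.r e) := by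
  rw [mul_assoc, vH_mul_vH R G H _ hF]

lemma evH_mul_Xv (e : G.E) (hF : (FSet G H (G.r e)).Finite) :
    (Xe R G e * vH R G H (G.r e)) * Xv R G (G.r e) = Xe R G e * vH R G H (G.r e) := by
  rw [mul_assoc, vH_mul_Xv R G H _ hF]

lemma vH_mul_vHg (e : G.E) (hF : (FSet G H (G.r e)).Finite) :
    vH R G H (G.r e) * (vH R G H (G.r e) * Xg R G e) = vH R G H (G.r e) * Xg R G e := by
  rw [← mul_assoc, vH_mul_vH R G H _ hF]

lemma Xv_mul_vHg (e : G.E) (hF : (FSet G H (G.r e)).Finite) :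
    Xv R G (G.r e) * (vH R G H (G.r e) * Xg R G e) = vH R G H (G.r e) * Xg R G e := by
  rw [← mul_assoc, Xv_mul_vH R G H _ hF]

end AuxLPA2

section AuxLPA3

variable (R : Type) [CommRing R] (G : LPGraph) (H : Set G.V)

lemma sub_mul_sub {A : Type} [Ring A] (a b c d : A) :
    (a - b) * (c - d) = a * c - a * d - b * c + b * d := by noncomm_ring

lemma Xv_src_mul_e_mul (e : G.E) (x : LPA R G) :
    Xv R G (G.s e) * (Xe R G e * x) = Xe R G e * x := by
  rw [← mul_assoc, Xv_mul_Xe]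

lemma vHg_mul_Xv_src (w : G.V) (e : G.E) :
    (vH R G H w * Xg R G e) * Xv R G (G.s e) = vH R G H w * Xg R G e := by
  rw [mul_assoc, Xg_mul_Xv]

lemma Xg_mul_e_mul_diff (e f : G.E) (hef : e ≠ f) (y : LPA R G) :
    Xg R G e * (Xe R G f * y) = 0 := by
  rw [← mul_assoc, Xg_mul_Xe_diff R G e f hef, zero_mul]

lemma mul_g_mul_e_diff (e f : G.E) (hef : e ≠ f) (x : LPA R G) :
    (x * Xg R G e) * Xe R G f = 0 := by
  rw [mul_assoc, Xg_mul_Xe_diff R G e f hef, mul_zero]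

end AuxLPA3

section PsiDef

variable (R : Type) [CommRing R] (G : LPGraph) (H S : Set G.V) (hH : G.Hereditary H)

noncomputable def psiV' : (quotGraph G H S hH).V → LPA R G := fun x =>
  match x with
  | Sum.inl a => Xv R G a.1 - (if _ : a.1 ∈ G.BH H ∧ a.1 ∉ S then vH R G H a.1 else 0)
  | Sum.inr b => vH R G H b.1

noncomputable def psiE' : (quotGraph G H S hH).E → LPA R G := fun x =>
  match x with
  | Sum.inl a => Xe R G a.1 -
      (if _ : G.r a.1 ∈ G.BH H ∧ G.r a.1 ∉ S then Xe R G a.1 * vH R G H (G.r a.1) else 0)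
  | Sum.inr b => Xe R G b.1 * vH R G H (G.r b.1)

noncomputable def psiG' : (quotGraph G H S hH).E → LPA R G := fun x =>
  match x with
  | Sum.inl a => Xg R G a.1 -
      (if _ : G.r a.1 ∈ G.BH H ∧ G.r a.1 ∉ S then vH R G H (G.r a.1) * Xg R G a.1 else 0)
  | Sum.inr b => vH R G H (G.r b.1) * Xg R G b.1

lemma psiV'_inl (a : {v : G.V // v ∉ H}) :
    psiV' R G H S hH (Sum.inl a)
      = Xv R G a.1 - (if _ : a.1 ∈ G.BH H ∧ a.1 ∉ S then vH R G H a.1 else 0) := rfl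

lemma psiV'_inr (b : {v : G.V // v ∈ G.BH H ∧ v ∉ S}) :
    psiV' R G H S hH (Sum.inr b) = vH R G H b.1 := rfl

lemma psiE'_inl (a : {e : G.E // G.r e ∉ H}) :
    psiE' R G H S hH (Sum.inl a) = Xe R G a.1 -
      (if _ : G.r a.1 ∈ G.BH H ∧ G.r a.1 ∉ S then Xe R G a.1 * vH R G H (G.r a.1) else 0) := rfl

lemma psiE'_inr (b : {e : G.E // G.r e ∈ G.BH H ∧ G.r e ∉ S}) :
    psiE' R G H S hH (Sum.inr b) = Xe R G b.1 * vH R G H (G.r b.1) := rfl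

lemma psiG'_inl (a : {e : G.E // G.r e ∉ H}) :
    psiG' R G H S hH (Sum.inl a) = Xg R G a.1 -
      (if _ : G.r a.1 ∈ G.BH H ∧ G.r a.1 ∉ S then vH R G H (G.r a.1) * Xg R G a.1 else 0) := rfl

lemma psiG'_inr (b : {e : G.E // G.r e ∈ G.BH H ∧ G.r e ∉ S}) :
    psiG' R G H S hH (Sum.inr b) = vH R G H (G.r b.1) * Xg R G b.1 := rfl

lemma BH_finite {v : G.V} (hv : v ∈ G.BH H) : (FSet G H v).Finite := hv.2.2.1

lemma psiV'_idem (x : (quotGraph G H S hH).V) :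
    psiV' R G H S hH x * psiV' R G H S hH x = psiV' R G H S hH x := by
  cases x with
  | inl a =>
    rw [psiV'_inl]
    by_cases hc : a.1 ∈ G.BH H ∧ a.1 ∉ S
    · have hF := BH_finite G H hc.1
      rw [dif_pos hc, sub_mul_sub, Xv_mul_self, Xv_mul_vH R G H _ hF, vH_mul_Xv R G H _ hF,
        vH_mul_vH R G H _ hF]
      abel
    · rw [dif_neg hc, sub_zero, Xv_mul_self]
  | inr b =>
    rw [psiV'_inr]
    exact vH_mul_vH R G H _ (BH_finite G H b.2.1)

lemma psiV'_orth (x y : (quotGraph G H S hH).V) (hxy : x ≠ y) :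
    psiV' R G H S hH x * psiV' R G H S hH y = 0 := by
  cases x with
  | inl a =>
    cases y with
    | inl a' =>
      have hvw : a.1 ≠ a'.1 := fun h => hxy (congrArg Sum.inl (Subtype.ext h))
      rw [psiV'_inl, psiV'_inl]
      by_cases hc : a.1 ∈ G.BH H ∧ a.1 ∉ S <;> by_cases hc' : a'.1 ∈ G.BH H ∧ a'.1 ∉ S
      · have hF := BH_finite G H hc.1; have hF' := BH_finite G H hc'.1
        rw [dif_pos hc, dif_pos hc', sub_mul_sub, Xv_mul_Xv R G _ _ hvw,
          Xv_ne_mul_vH R G H a'.1 a.1 hvw hF', vH_mul_Xv_ne R G H a.1 a'.1 hvw hF,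
          vH_mul_vH_ne R G H a.1 a'.1 hvw hF hF']
        abel
      · have hF := BH_finite G H hc.1
        rw [dif_pos hc, dif_neg hc', sub_zero, sub_mul, Xv_mul_Xv R G _ _ hvw,
          vH_mul_Xv_ne R G H a.1 a'.1 hvw hF, sub_self]
      · have hF' := BH_finite G H hc'.1
        rw [dif_neg hc, dif_pos hc', sub_zero, mul_sub, Xv_mul_Xv R G _ _ hvw,
          Xv_ne_mul_vH R G H a'.1 a.1 hvw hF', sub_self]
      · rw [dif_neg hc, dif_neg hc', sub_zero, sub_zero, Xv_mul_Xv R G _ _ hvw]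
    | inr b =>
      rw [psiV'_inl, psiV'_inr]
      by_cases hvw : a.1 = b.1
      · have hc : a.1 ∈ G.BH H ∧ a.1 ∉ S := by rw [hvw]; exact b.2
        have hF : (FSet G H a.1).Finite := BH_finite G H hc.1
        rw [dif_pos hc, ← hvw, sub_mul, Xv_mul_vH R G H _ hF, vH_mul_vH R G H _ hF, sub_self]
      · have hF' := BH_finite G H b.2.1
        by_cases hc : a.1 ∈ G.BH H ∧ a.1 ∉ S
        · have hF := BH_finite G H hc.1
          rw [dif_pos hc, sub_mul, Xv_ne_mul_vH R G H b.1 a.1 hvw hF',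
            vH_mul_vH_ne R G H a.1 b.1 hvw hF hF', sub_self]
        · rw [dif_neg hc, sub_zero, Xv_ne_mul_vH R G H b.1 a.1 hvw hF']
  | inr b =>
    cases y with
    | inl a =>
      rw [psiV'_inl, psiV'_inr]
      by_cases hvw : b.1 = a.1
      · have hc : a.1 ∈ G.BH H ∧ a.1 ∉ S := by rw [← hvw]; exact b.2
        have hF : (FSet G H b.1).Finite := BH_finite G H b.2.1
        rw [dif_pos hc, ← hvw, mul_sub, vH_mul_Xv R G H _ hF, vH_mul_vH R G H _ hF, sub_self]
      · have hF := BH_finite G H b.2.1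
        by_cases hc : a.1 ∈ G.BH H ∧ a.1 ∉ S
        · have hF' := BH_finite G H hc.1
          rw [dif_pos hc, mul_sub, vH_mul_Xv_ne R G H b.1 a.1 hvw hF,
            vH_mul_vH_ne R G H b.1 a.1 hvw hF hF', sub_self]
        · rw [dif_neg hc, sub_zero, vH_mul_Xv_ne R G H b.1 a.1 hvw hF]
    | inr b' =>
      have hvw : b.1 ≠ b'.1 := fun h => hxy (congrArg Sum.inr (Subtype.ext h))
      rw [psiV'_inr, psiV'_inr]
      exact vH_mul_vH_ne R G H b.1 b'.1 hvw (BH_finite G H b.2.1) (BH_finite G H b'.2.1)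

end PsiDef

section PsiRel

variable (R : Type) [CommRing R] (G : LPGraph) (H S : Set G.V) (hH : G.Hereditary H)

lemma psiV'_src_mul_psiE'_inl (e : G.E) (he : G.r e ∉ H) (hs : G.s e ∉ H) :
    psiV' R G H S hH (Sum.inl ⟨G.s e, hs⟩) * psiE' R G H S hH (Sum.inl ⟨e, he⟩)
      = psiE' R G H S hH (Sum.inl ⟨e, he⟩) := by
  show (Xv R G (G.s e) - (if _ : G.s e ∈ G.BH H ∧ G.s e ∉ S then vH R G H (G.s e) else 0)) *
      (Xe R G e - (if _ : G.r e ∈ G.BH H ∧ G.r e ∉ S then Xe R G e * vH R G H (G.r e) else 0))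
      = Xe R G e - (if _ : G.r e ∈ G.BH H ∧ G.r e ∉ S then Xe R G e * vH R G H (G.r e) else 0)
  by_cases hcs : G.s e ∈ G.BH H ∧ G.s e ∉ S <;> by_cases hcr : G.r e ∈ G.BH H ∧ G.r e ∉ S
  · have hFs := BH_finite G H hcs.1
    rw [dif_pos hcs, dif_pos hcr, sub_mul_sub, Xv_mul_Xe, Xv_src_mul_e_mul,
      vH_mul_Xe R G H (G.s e) hFs e ⟨rfl, he⟩, vH_mul_evH R G H (G.s e) hFs e ⟨rfl, he⟩]
    abel
  · have hFs := BH_finite G H hcs.1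
    rw [dif_pos hcs, dif_neg hcr, sub_zero, sub_mul, Xv_mul_Xe,
      vH_mul_Xe R G H (G.s e) hFs e ⟨rfl, he⟩, sub_zero]
  · rw [dif_neg hcs, dif_pos hcr, sub_zero, mul_sub, Xv_mul_Xe, Xv_src_mul_e_mul]
  · rw [dif_neg hcs, dif_neg hcr, sub_zero, sub_zero, Xv_mul_Xe]

lemma psiV'_src_mul_psiE'_inr (e : G.E) (hb : G.r e ∈ G.BH H ∧ G.r e ∉ S) (hs : G.s e ∉ H) :
    psiV' R G H S hH (Sum.inl ⟨G.s e, hs⟩) * psiE' R G H S hH (Sum.inr ⟨e, hb⟩)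
      = psiE' R G H S hH (Sum.inr ⟨e, hb⟩) := by
  show (Xv R G (G.s e) - (if _ : G.s e ∈ G.BH H ∧ G.s e ∉ S then vH R G H (G.s e) else 0)) *
      (Xe R G e * vH R G H (G.r e)) = Xe R G e * vH R G H (G.r e)
  by_cases hcs : G.s e ∈ G.BH H ∧ G.s e ∉ S
  · have hFs := BH_finite G H hcs.1
    rw [dif_pos hcs, sub_mul, Xv_src_mul_e_mul,
      vH_mul_evH R G H (G.s e) hFs e ⟨rfl, hb.1.1⟩, sub_zero]
  · rw [dif_neg hcs, sub_zero, Xv_src_mul_e_mul]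

lemma psiE'_mul_psiV'_rng_inl (e : G.E) (he : G.r e ∉ H) :
    psiE' R G H S hH (Sum.inl ⟨e, he⟩) * psiV' R G H S hH (Sum.inl ⟨G.r e, he⟩)
      = psiE' R G H S hH (Sum.inl ⟨e, he⟩) := by
  show (Xe R G e - (if _ : G.r e ∈ G.BH H ∧ G.r e ∉ S then Xe R G e * vH R G H (G.r e) else 0)) *
      (Xv R G (G.r e) - (if _ : G.r e ∈ G.BH H ∧ G.r e ∉ S then vH R G H (G.r e) else 0))
      = Xe R G e - (if _ : G.r e ∈ G.BH H ∧ G.r e ∉ S then Xe R G e * vH R G H (G.r e) else 0)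
  by_cases hc : G.r e ∈ G.BH H ∧ G.r e ∉ S
  · have hF := BH_finite G H hc.1
    rw [dif_pos hc, dif_pos hc, sub_mul_sub, Xe_mul_Xv, evH_mul_Xv R G H e hF,
      evH_mul_vH R G H e hF]
    abel
  · rw [dif_neg hc, dif_neg hc, sub_zero, sub_zero, Xe_mul_Xv]

lemma psiE'_mul_psiV'_rng_inr (e : G.E) (hb : G.r e ∈ G.BH H ∧ G.r e ∉ S) :
    psiE' R G H S hH (Sum.inr ⟨e, hb⟩) * psiV' R G H S hH (Sum.inr ⟨G.r e, hb⟩)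
      = psiE' R G H S hH (Sum.inr ⟨e, hb⟩) := by
  show (Xe R G e * vH R G H (G.r e)) * vH R G H (G.r e) = Xe R G e * vH R G H (G.r e)
  exact evH_mul_vH R G H e (BH_finite G H hb.1)

lemma psiV'_rng_mul_psiG'_inl (e : G.E) (he : G.r e ∉ H) :
    psiV' R G H S hH (Sum.inl ⟨G.r e, he⟩) * psiG' R G H S hH (Sum.inl ⟨e, he⟩)
      = psiG' R G H S hH (Sum.inl ⟨e, he⟩) := by
  show (Xv R G (G.r e) - (if _ : G.r e ∈ G.BH H ∧ G.r e ∉ S then vH R G H (G.r e) else 0)) *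
      (Xg R G e - (if _ : G.r e ∈ G.BH H ∧ G.r e ∉ S then vH R G H (G.r e) * Xg R G e else 0))
      = Xg R G e - (if _ : G.r e ∈ G.BH H ∧ G.r e ∉ S then vH R G H (G.r e) * Xg R G e else 0)
  by_cases hc : G.r e ∈ G.BH H ∧ G.r e ∉ S
  · have hF := BH_finite G H hc.1
    rw [dif_pos hc, dif_pos hc, sub_mul_sub, Xv_mul_Xg, Xv_mul_vHg R G H e hF,
      vH_mul_vHg R G H e hF]
    abel
  · rw [dif_neg hc, dif_neg hc, sub_zero, sub_zero, Xv_mul_Xg]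

lemma psiV'_rng_mul_psiG'_inr (e : G.E) (hb : G.r e ∈ G.BH H ∧ G.r e ∉ S) :
    psiV' R G H S hH (Sum.inr ⟨G.r e, hb⟩) * psiG' R G H S hH (Sum.inr ⟨e, hb⟩)
      = psiG' R G H S hH (Sum.inr ⟨e, hb⟩) := by
  show vH R G H (G.r e) * (vH R G H (G.r e) * Xg R G e) = vH R G H (G.r e) * Xg R G e
  exact vH_mul_vHg R G H e (BH_finite G H hb.1)

lemma psiG'_mul_psiV'_src_inl (e : G.E) (he : G.r e ∉ H) (hs : G.s e ∉ H) :
    psiG' R G H S hH (Sum.inl ⟨e, he⟩) * psiV' R G H S hH (Sum.inl ⟨G.s e, hs⟩)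
      = psiG' R G H S hH (Sum.inl ⟨e, he⟩) := by
  show (Xg R G e - (if _ : G.r e ∈ G.BH H ∧ G.r e ∉ S then vH R G H (G.r e) * Xg R G e else 0)) *
      (Xv R G (G.s e) - (if _ : G.s e ∈ G.BH H ∧ G.s e ∉ S then vH R G H (G.s e) else 0))
      = Xg R G e - (if _ : G.r e ∈ G.BH H ∧ G.r e ∉ S then vH R G H (G.r e) * Xg R G e else 0)
  by_cases hcr : G.r e ∈ G.BH H ∧ G.r e ∉ S <;> by_cases hcs : G.s e ∈ G.BH H ∧ G.s e ∉ S
  · have hFs := BH_finite G H hcs.1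
    rw [dif_pos hcr, dif_pos hcs, sub_mul_sub, Xg_mul_Xv,
      Xg_mul_vH R G H (G.s e) hFs e ⟨rfl, he⟩, vHg_mul_Xv_src,
      xg_mul_vH_mul R G H (G.s e) hFs e ⟨rfl, he⟩]
    abel
  · rw [dif_pos hcr, dif_neg hcs, sub_zero, sub_mul, Xg_mul_Xv, vHg_mul_Xv_src]
  · have hFs := BH_finite G H hcs.1
    rw [dif_neg hcr, dif_pos hcs, sub_zero, mul_sub, Xg_mul_Xv,
      Xg_mul_vH R G H (G.s e) hFs e ⟨rfl, he⟩, sub_zero]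
  · rw [dif_neg hcr, dif_neg hcs, sub_zero, sub_zero, Xg_mul_Xv]

lemma psiG'_mul_psiV'_src_inr (e : G.E) (hb : G.r e ∈ G.BH H ∧ G.r e ∉ S) (hs : G.s e ∉ H) :
    psiG' R G H S hH (Sum.inr ⟨e, hb⟩) * psiV' R G H S hH (Sum.inl ⟨G.s e, hs⟩)
      = psiG' R G H S hH (Sum.inr ⟨e, hb⟩) := by
  show (vH R G H (G.r e) * Xg R G e) *
      (Xv R G (G.s e) - (if _ : G.s e ∈ G.BH H ∧ G.s e ∉ S then vH R G H (G.s e) else 0))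
      = vH R G H (G.r e) * Xg R G e
  by_cases hcs : G.s e ∈ G.BH H ∧ G.s e ∉ S
  · have hFs := BH_finite G H hcs.1
    rw [dif_pos hcs, mul_sub, vHg_mul_Xv_src,
      xg_mul_vH_mul R G H (G.s e) hFs e ⟨rfl, hb.1.1⟩, sub_zero]
  · rw [dif_neg hcs, sub_zero, vHg_mul_Xv_src]

lemma psiG'_mul_psiE'_same_inl (e : G.E) (he : G.r e ∉ H) :
    psiG' R G H S hH (Sum.inl ⟨e, he⟩) * psiE' R G H S hH (Sum.inl ⟨e, he⟩)
      = psiV' R G H S hH (Sum.inl ⟨G.r e, he⟩) := by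
  show (Xg R G e - (if _ : G.r e ∈ G.BH H ∧ G.r e ∉ S then vH R G H (G.r e) * Xg R G e else 0)) *
      (Xe R G e - (if _ : G.r e ∈ G.BH H ∧ G.r e ∉ S then Xe R G e * vH R G H (G.r e) else 0))
      = Xv R G (G.r e) - (if _ : G.r e ∈ G.BH H ∧ G.r e ∉ S then vH R G H (G.r e) else 0)
  by_cases hc : G.r e ∈ G.BH H ∧ G.r e ∉ S
  · have hF := BH_finite G H hc.1
    rw [dif_pos hc, dif_pos hc, dif_pos hc, sub_mul_sub, Xg_mul_Xe_same,
      g_mul_evH R G H e hF, vHg_mul_e R G H e hF, vHg_mul_evH R G H e hF]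
    abel
  · rw [dif_neg hc, dif_neg hc, dif_neg hc, sub_zero, sub_zero, sub_zero, Xg_mul_Xe_same]

lemma psiG'_mul_psiE'_same_inr (e : G.E) (hb : G.r e ∈ G.BH H ∧ G.r e ∉ S) :
    psiG' R G H S hH (Sum.inr ⟨e, hb⟩) * psiE' R G H S hH (Sum.inr ⟨e, hb⟩)
      = psiV' R G H S hH (Sum.inr ⟨G.r e, hb⟩) := by
  show (vH R G H (G.r e) * Xg R G e) * (Xe R G e * vH R G H (G.r e)) = vH R G H (G.r e)
  exact vHg_mul_evH R G H e (BH_finite G H hb.1)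

lemma psiG'_mul_psiE'_diff_inl_inl (e f : G.E) (he : G.r e ∉ H) (hf : G.r f ∉ H)
    (hef : e ≠ f) :
    psiG' R G H S hH (Sum.inl ⟨e, he⟩) * psiE' R G H S hH (Sum.inl ⟨f, hf⟩) = 0 := by
  show (Xg R G e - (if _ : G.r e ∈ G.BH H ∧ G.r e ∉ S then vH R G H (G.r e) * Xg R G e else 0)) *
      (Xe R G f - (if _ : G.r f ∈ G.BH H ∧ G.r f ∉ S then Xe R G f * vH R G H (G.r f) else 0))
      = 0
  by_cases hce : G.r e ∈ G.BH H ∧ G.r e ∉ S <;> by_cases hcf : G.r f ∈ G.BH H ∧ G.r f ∉ S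
  · rw [dif_pos hce, dif_pos hcf, sub_mul_sub, Xg_mul_Xe_diff R G e f hef,
      Xg_mul_e_mul_diff R G e f hef, mul_g_mul_e_diff R G e f hef,
      g_mul_e_diff R G e f hef]
    simp
  · rw [dif_pos hce, dif_neg hcf, sub_zero, sub_mul, Xg_mul_Xe_diff R G e f hef,
      mul_g_mul_e_diff R G e f hef, sub_self]
  · rw [dif_neg hce, dif_pos hcf, sub_zero, mul_sub, Xg_mul_Xe_diff R G e f hef,
      Xg_mul_e_mul_diff R G e f hef, sub_self]
  · rw [dif_neg hce, dif_neg hcf, sub_zero, sub_zero, Xg_mul_Xe_diff R G e f hef]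

lemma psiG'_mul_psiE'_diff_inl_inr_same (e : G.E) (he : G.r e ∉ H)
    (hb : G.r e ∈ G.BH H ∧ G.r e ∉ S) :
    psiG' R G H S hH (Sum.inl ⟨e, he⟩) * psiE' R G H S hH (Sum.inr ⟨e, hb⟩) = 0 := by
  show (Xg R G e - (if _ : G.r e ∈ G.BH H ∧ G.r e ∉ S then vH R G H (G.r e) * Xg R G e else 0)) *
      (Xe R G e * vH R G H (G.r e)) = 0
  have hF := BH_finite G H hb.1
  rw [dif_pos hb, sub_mul, g_mul_evH R G H e hF, vHg_mul_evH R G H e hF, sub_self]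

lemma psiG'_mul_psiE'_diff_inl_inr_ne (e f : G.E) (he : G.r e ∉ H)
    (hbf : G.r f ∈ G.BH H ∧ G.r f ∉ S) (hef : e ≠ f) :
    psiG' R G H S hH (Sum.inl ⟨e, he⟩) * psiE' R G H S hH (Sum.inr ⟨f, hbf⟩) = 0 := by
  show (Xg R G e - (if _ : G.r e ∈ G.BH H ∧ G.r e ∉ S then vH R G H (G.r e) * Xg R G e else 0)) *
      (Xe R G f * vH R G H (G.r f)) = 0
  by_cases hce : G.r e ∈ G.BH H ∧ G.r e ∉ S
  · rw [dif_pos hce, sub_mul, Xg_mul_e_mul_diff R G e f hef, g_mul_e_diff R G e f hef,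
      sub_self]
  · rw [dif_neg hce, sub_zero, Xg_mul_e_mul_diff R G e f hef]

lemma psiG'_mul_psiE'_diff_inr_inl_same (e : G.E) (hb : G.r e ∈ G.BH H ∧ G.r e ∉ S)
    (he : G.r e ∉ H) :
    psiG' R G H S hH (Sum.inr ⟨e, hb⟩) * psiE' R G H S hH (Sum.inl ⟨e, he⟩) = 0 := by
  show (vH R G H (G.r e) * Xg R G e) *
      (Xe R G e - (if _ : G.r e ∈ G.BH H ∧ G.r e ∉ S then Xe R G e * vH R G H (G.r e) else 0))
      = 0
  have hF := BH_finite G H hb.1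
  rw [dif_pos hb, mul_sub, vHg_mul_e R G H e hF, vHg_mul_evH R G H e hF, sub_self]

lemma psiG'_mul_psiE'_diff_inr_inl_ne (e f : G.E) (hbe : G.r e ∈ G.BH H ∧ G.r e ∉ S)
    (hf : G.r f ∉ H) (hef : e ≠ f) :
    psiG' R G H S hH (Sum.inr ⟨e, hbe⟩) * psiE' R G H S hH (Sum.inl ⟨f, hf⟩) = 0 := by
  show (vH R G H (G.r e) * Xg R G e) *
      (Xe R G f - (if _ : G.r f ∈ G.BH H ∧ G.r f ∉ S then Xe R G f * vH R G H (G.r f) else 0))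
      = 0
  by_cases hcf : G.r f ∈ G.BH H ∧ G.r f ∉ S
  · rw [dif_pos hcf, mul_sub, mul_g_mul_e_diff R G e f hef, g_mul_e_diff R G e f hef,
      sub_self]
  · rw [dif_neg hcf, sub_zero, mul_g_mul_e_diff R G e f hef]

lemma psiG'_mul_psiE'_diff_inr_inr (e f : G.E) (hbe : G.r e ∈ G.BH H ∧ G.r e ∉ S)
    (hbf : G.r f ∈ G.BH H ∧ G.r f ∉ S) (hef : e ≠ f) :
    psiG' R G H S hH (Sum.inr ⟨e, hbe⟩) * psiE' R G H S hH (Sum.inr ⟨f, hbf⟩) = 0 := by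
  show (vH R G H (G.r e) * Xg R G e) * (Xe R G f * vH R G H (G.r f)) = 0
  exact g_mul_e_diff R G e f hef _ _

end PsiRel

section PsiCk2

variable (R : Type) [CommRing R] (G : LPGraph) (H S : Set G.V) (hH : G.Hereditary H)

lemma psi_pair_sum (e : G.E) (he : G.r e ∉ H) :
    psiE' R G H S hH (Sum.inl ⟨e, he⟩) * psiG' R G H S hH (Sum.inl ⟨e, he⟩) +
      (if hb : G.r e ∈ G.BH H ∧ G.r e ∉ S then
        psiE' R G H S hH (Sum.inr ⟨e, hb⟩) * psiG' R G H S hH (Sum.inr ⟨e, hb⟩) else 0)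
      = Xe R G e * Xg R G e := by
  by_cases hb : G.r e ∈ G.BH H ∧ G.r e ∉ S
  · have hF := BH_finite G H hb.1
    rw [dif_pos hb, psiE'_inl, psiG'_inl, psiE'_inr, psiG'_inr, dif_pos hb, dif_pos hb]
    have h1 : (Xe R G e * vH R G H (G.r e)) * Xg R G e
        = Xe R G e * (vH R G H (G.r e) * Xg R G e) := by rw [mul_assoc]
    have h2 : (Xe R G e * vH R G H (G.r e)) * (vH R G H (G.r e) * Xg R G e)
        = Xe R G e * (vH R G H (G.r e) * Xg R G e) := by
      rw [mul_assoc, vH_mul_vHg R G H e hF]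
    have h3 : Xe R G e * (vH R G H (G.r e) * Xg R G e)
        = Xe R G e * (vH R G H (G.r e) * Xg R G e) := rfl
    rw [sub_mul_sub, h1, h2]
    abel
  · rw [dif_neg hb, psiE'_inl, psiG'_inl, dif_neg hb, dif_neg hb, sub_zero, sub_zero,
      add_zero]

lemma piQ_ee_of_rng_mem (e : G.E) (hre : G.r e ∈ H) :
    piQ R G H S (Xe R G e * Xg R G e) = 0 := by
  have : Xe R G e * Xg R G e = Xe R G e * (Xv R G (G.r e) * Xg R G e) := by
    rw [← mul_assoc, Xe_mul_Xv]
  rw [this, map_mul, map_mul, piQ_Xv_of_mem R G H S (G.r e) hre, zero_mul, mul_zero]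

lemma piQ_vH_eq_zero (u : G.V) (hu : u ∉ H) (hF : (FSet G H u).Finite)
    (hFne : (FSet G H u).Nonempty) (hc : ¬(u ∈ G.BH H ∧ u ∉ S)) :
    piQ R G H S (vH R G H u) = 0 := by
  by_cases hS' : u ∈ S
  · exact piQ_vH_of_mem R G H S u hS'
  · have hnB : u ∉ G.BH H := fun hB => hc ⟨hB, hS'⟩
    have hfinAll : {e : G.E | G.s e = u}.Finite := by
      by_contra h
      exact hnB ⟨hu, h, hF, hFne⟩
    have hAllne : {e : G.E | G.s e = u}.Nonempty := by
      obtain ⟨e, he⟩ := hFne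
      exact ⟨e, he.1⟩
    have hXv : piQ R G H S (Xv R G u)
        = ∑ e ∈ hF.toFinset, piQ R G H S (Xe R G e * Xg R G e) := by
      rw [Xv_ck2 R G u hfinAll hAllne, map_sum]
      refine (Finset.sum_subset (fun e h => hfinAll.mem_toFinset.mpr
        (hF.mem_toFinset.mp h).1) (fun e h hne => ?_)).symm
      have hre : G.r e ∈ H := by
        by_contra hre
        exact hne (hF.mem_toFinset.mpr ⟨hfinAll.mem_toFinset.mp h, hre⟩)
      exact piQ_ee_of_rng_mem R G H S e hre
    rw [vH_eq R G H u hF, map_sub, hXv, map_sum, sub_self]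

lemma psi_ck2 (x : (quotGraph G H S hH).V)
    (h1 : {y : (quotGraph G H S hH).E | (quotGraph G H S hH).s y = x}.Finite)
    (h2 : {y : (quotGraph G H S hH).E | (quotGraph G H S hH).s y = x}.Nonempty) :
    piQ R G H S (psiV' R G H S hH x)
      = ∑ y ∈ h1.toFinset, piQ R G H S (psiE' R G H S hH y) *
          piQ R G H S (psiG' R G H S hH y) := by
  cases x with
  | inr b =>
    exfalso
    obtain ⟨y, hy⟩ := h2
    cases y with
    | inl a => exact Sum.inl_ne_inr hy
    | inr b' => exact Sum.inl_ne_inr hy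
  | inl a =>
    obtain ⟨u, hu⟩ := a
    have h1' : (EQ G H S hH u hu).Finite := h1
    have hF : (FSet G H u).Finite := FSet_finite_of_EQ G H S hH u hu h1'
    have hFne : (FSet G H u).Nonempty := FSet_nonempty_of_EQ G H S hH u hu h2
    have hRHS : ∑ y ∈ h1.toFinset, piQ R G H S (psiE' R G H S hH y) *
          piQ R G H S (psiG' R G H S hH y)
        = ∑ e ∈ hF.toFinset, piQ R G H S (Xe R G e * Xg R G e) := by
      have := sumQ G H S hH u hu h1' hF
        (fun y => piQ R G H S (psiE' R G H S hH y * psiG' R G H S hH y))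
      rw [show (∑ y ∈ h1.toFinset, piQ R G H S (psiE' R G H S hH y) *
            piQ R G H S (psiG' R G H S hH y))
          = ∑ y ∈ h1'.toFinset, piQ R G H S (psiE' R G H S hH y * psiG' R G H S hH y) from
        Finset.sum_congr rfl fun y _ => by rw [map_mul]]
      rw [this]
      refine Finset.sum_congr rfl fun e he => ?_
      have hee := hF.mem_toFinset.mp he
      rw [dif_pos hee.2, ← psi_pair_sum R G H S hH e hee.2, map_add]
      congr 1
      by_cases hb : G.r e ∈ G.BH H ∧ G.r e ∉ S
      · rw [dif_pos hb, dif_pos hb]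
      · rw [dif_neg hb, dif_neg hb, map_zero]
    have hsplit : ∑ e ∈ hF.toFinset, piQ R G H S (Xe R G e * Xg R G e)
        = piQ R G H S (Xv R G u - vH R G H u) := by
      rw [← map_sum]
      congr 1
      rw [vH_eq R G H u hF]
      abel
    by_cases hc : u ∈ G.BH H ∧ u ∉ S
    · have hpsi : psiV' R G H S hH (Sum.inl ⟨u, hu⟩) = Xv R G u - vH R G H u := by
        rw [psiV'_inl, dif_pos hc]
      rw [hRHS, hsplit, hpsi]
    · have hpsi : psiV' R G H S hH (Sum.inl ⟨u, hu⟩) = Xv R G u := by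
        rw [psiV'_inl, dif_neg hc, sub_zero]
      rw [hRHS, hsplit, hpsi, map_sub, piQ_vH_eq_zero R G H S u hu hF hFne hc]
      abel

noncomputable def psi0 : FreeAlgebra R (LGen (quotGraph G H S hH)) →ₐ[R]
    QuotLPA R G (IHS R G H S) :=
  FreeAlgebra.lift R fun x => match x with
    | LGen.vertex w => piQ R G H S (psiV' R G H S hH w)
    | LGen.edge y => piQ R G H S (psiE' R G H S hH y)
    | LGen.ghost y => piQ R G H S (psiG' R G H S hH y)

lemma psi0_fv (w : (quotGraph G H S hH).V) :
    psi0 R G H S hH (fv R (quotGraph G H S hH) w) = piQ R G H S (psiV' R G H S hH w) := by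
  rw [psi0, fv, FreeAlgebra.lift_ι_apply]

lemma psi0_fe (y : (quotGraph G H S hH).E) :
    psi0 R G H S hH (fe R (quotGraph G H S hH) y) = piQ R G H S (psiE' R G H S hH y) := by
  rw [psi0, fe, FreeAlgebra.lift_ι_apply]

lemma psi0_fg (y : (quotGraph G H S hH).E) :
    psi0 R G H S hH (fg R (quotGraph G H S hH) y) = piQ R G H S (psiG' R G H S hH y) := by
  rw [psi0, fg, FreeAlgebra.lift_ι_apply]

lemma psi0_rel : ∀ ⦃a b : FreeAlgebra R (LGen (quotGraph G H S hH))⦄,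
    LRel R (quotGraph G H S hH) a b → psi0 R G H S hH a = psi0 R G H S hH b := by
  intro a b h
  induction h with
  | idem w =>
      rw [map_mul, psi0_fv, ← map_mul, psiV'_idem]
  | orth w w' hww =>
      rw [map_mul, psi0_fv, psi0_fv, ← map_mul, psiV'_orth R G H S hH w w' hww, map_zero,
        map_zero]
  | edge_src y =>
      rw [map_mul, psi0_fv, psi0_fe, ← map_mul]
      congr 1
      cases y with
      | inl a => exact psiV'_src_mul_psiE'_inl R G H S hH a.1 a.2 (fun h => a.2 (hH a.1 h))
      | inr b =>
          exact psiV'_src_mul_psiE'_inr R G H S hH b.1 b.2 (fun h => b.2.1.1 (hH b.1 h))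
  | edge_rng y =>
      rw [map_mul, psi0_fv, psi0_fe, ← map_mul]
      congr 1
      cases y with
      | inl a => exact psiE'_mul_psiV'_rng_inl R G H S hH a.1 a.2
      | inr b => exact psiE'_mul_psiV'_rng_inr R G H S hH b.1 b.2
  | ghost_rng y =>
      rw [map_mul, psi0_fv, psi0_fg, ← map_mul]
      congr 1
      cases y with
      | inl a => exact psiV'_rng_mul_psiG'_inl R G H S hH a.1 a.2
      | inr b => exact psiV'_rng_mul_psiG'_inr R G H S hH b.1 b.2
  | ghost_src y =>
      rw [map_mul, psi0_fv, psi0_fg, ← map_mul]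
      congr 1
      cases y with
      | inl a => exact psiG'_mul_psiV'_src_inl R G H S hH a.1 a.2 (fun h => a.2 (hH a.1 h))
      | inr b =>
          exact psiG'_mul_psiV'_src_inr R G H S hH b.1 b.2 (fun h => b.2.1.1 (hH b.1 h))
  | ck1_same y =>
      rw [map_mul, psi0_fe, psi0_fg, psi0_fv, ← map_mul]
      congr 1
      cases y with
      | inl a => exact psiG'_mul_psiE'_same_inl R G H S hH a.1 a.2
      | inr b => exact psiG'_mul_psiE'_same_inr R G H S hH b.1 b.2
  | ck1_diff y z hyz =>
      rw [map_mul, psi0_fe, psi0_fg, ← map_mul, map_zero]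
      rw [show psiG' R G H S hH y * psiE' R G H S hH z = 0 from ?_, map_zero]
      cases y with
      | inl a =>
        cases z with
        | inl a' =>
            exact psiG'_mul_psiE'_diff_inl_inl R G H S hH a.1 a'.1 a.2 a'.2
              (fun h => hyz (congrArg Sum.inl (Subtype.ext h)))
        | inr b =>
            by_cases hval : a.1 = b.1
            · obtain ⟨e, he⟩ := a
              obtain ⟨e', hb⟩ := b
              cases hval
              exact psiG'_mul_psiE'_diff_inl_inr_same R G H S hH e he hb
            · exact psiG'_mul_psiE'_diff_inl_inr_ne R G H S hH a.1 b.1 a.2 b.2 hval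
      | inr b =>
        cases z with
        | inl a =>
            by_cases hval : b.1 = a.1
            · obtain ⟨e, hb⟩ := b
              obtain ⟨e', he⟩ := a
              cases hval
              exact psiG'_mul_psiE'_diff_inr_inl_same R G H S hH e hb he
            · exact psiG'_mul_psiE'_diff_inr_inl_ne R G H S hH b.1 a.1 b.2 a.2 hval
        | inr b' =>
            exact psiG'_mul_psiE'_diff_inr_inr R G H S hH b.1 b'.1 b.2 b'.2
              (fun h => hyz (congrArg Sum.inr (Subtype.ext h)))
  | ck2 w h1 h2 =>
      rw [psi0_fv, map_sum, psi_ck2 R G H S hH w h1 h2]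
      exact Finset.sum_congr rfl fun y _ => by rw [map_mul, psi0_fe, psi0_fg]

noncomputable def Psi : LPA R (quotGraph G H S hH) →ₐ[R] QuotLPA R G (IHS R G H S) :=
  RingQuot.liftAlgHom R ⟨psi0 R G H S hH, psi0_rel R G H S hH⟩

lemma Psi_Xv (w : (quotGraph G H S hH).V) :
    Psi R G H S hH (Xv R (quotGraph G H S hH) w) = piQ R G H S (psiV' R G H S hH w) := by
  rw [Psi, Xv, RingQuot.liftAlgHom_mkAlgHom_apply, psi0_fv]

lemma Psi_Xe (y : (quotGraph G H S hH).E) :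
    Psi R G H S hH (Xe R (quotGraph G H S hH) y) = piQ R G H S (psiE' R G H S hH y) := by
  rw [Psi, Xe, RingQuot.liftAlgHom_mkAlgHom_apply, psi0_fe]

lemma Psi_Xg (y : (quotGraph G H S hH).E) :
    Psi R G H S hH (Xg R (quotGraph G H S hH) y) = piQ R G H S (psiG' R G H S hH y) := by
  rw [Psi, Xg, RingQuot.liftAlgHom_mkAlgHom_apply, psi0_fg]

end PsiCk2

section Inverse

variable (R : Type) [CommRing R] (G : LPGraph) (H S : Set G.V) (hH : G.Hereditary H)
  (hS : G.Saturated H)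

lemma Phi_psiV' (w : (quotGraph G H S hH).V) :
    Phi R G H S hH hS (psiV' R G H S hH w) = Xv R (quotGraph G H S hH) w := by
  cases w with
  | inl a =>
    rw [psiV'_inl, map_sub, Phi_Xv]
    by_cases hc : a.1 ∈ G.BH H ∧ a.1 ∉ S
    · rw [dif_pos hc, Phi_vH R G H S hH hS a.1 hc.1, dif_pos hc, phiV, dif_neg a.2,
        dif_pos hc, add_sub_cancel_right]
    · rw [dif_neg hc, map_zero, sub_zero, phiV, dif_neg a.2, dif_neg hc, add_zero]
  | inr b =>
    rw [psiV'_inr, Phi_vH R G H S hH hS b.1 b.2.1, dif_pos b.2]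

lemma Phi_psiE' (y : (quotGraph G H S hH).E) :
    Phi R G H S hH hS (psiE' R G H S hH y) = Xe R (quotGraph G H S hH) y := by
  cases y with
  | inl a =>
    rw [psiE'_inl, map_sub, Phi_Xe]
    by_cases hc : G.r a.1 ∈ G.BH H ∧ G.r a.1 ∉ S
    · rw [dif_pos hc, map_mul, Phi_Xe, Phi_vH R G H S hH hS (G.r a.1) hc.1, dif_pos hc,
        phiE, dif_pos a.2, dif_pos hc]
      have h1 : Xe R (quotGraph G H S hH) (Sum.inl ⟨a.1, a.2⟩) *
          Xv R (quotGraph G H S hH) (Sum.inr ⟨G.r a.1, hc⟩) = 0 :=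
        Xe_mul_Xv_ne R (quotGraph G H S hH) _ _ Sum.inl_ne_inr
      have h2 : Xe R (quotGraph G H S hH) (Sum.inr ⟨a.1, hc⟩) *
          Xv R (quotGraph G H S hH) (Sum.inr ⟨G.r a.1, hc⟩)
          = Xe R (quotGraph G H S hH) (Sum.inr ⟨a.1, hc⟩) :=
        Xe_mul_Xv R (quotGraph G H S hH) (Sum.inr ⟨a.1, hc⟩)
      rw [add_mul, h1, h2, zero_add, add_sub_cancel_right]
    · rw [dif_neg hc, map_zero, sub_zero, phiE, dif_pos a.2, dif_neg hc, add_zero]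
  | inr b =>
    rw [psiE'_inr, map_mul, Phi_Xe, Phi_vH R G H S hH hS (G.r b.1) b.2.1, dif_pos b.2,
      phiE, dif_pos b.2.1.1, dif_pos b.2]
    have h1 : Xe R (quotGraph G H S hH) (Sum.inl ⟨b.1, b.2.1.1⟩) *
        Xv R (quotGraph G H S hH) (Sum.inr ⟨G.r b.1, b.2⟩) = 0 :=
      Xe_mul_Xv_ne R (quotGraph G H S hH) _ _ Sum.inl_ne_inr
    have h2 : Xe R (quotGraph G H S hH) (Sum.inr ⟨b.1, b.2⟩) *
        Xv R (quotGraph G H S hH) (Sum.inr ⟨G.r b.1, b.2⟩)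
        = Xe R (quotGraph G H S hH) (Sum.inr ⟨b.1, b.2⟩) :=
      Xe_mul_Xv R (quotGraph G H S hH) (Sum.inr ⟨b.1, b.2⟩)
    rw [add_mul, h1, h2, zero_add]

lemma Phi_psiG' (y : (quotGraph G H S hH).E) :
    Phi R G H S hH hS (psiG' R G H S hH y) = Xg R (quotGraph G H S hH) y := by
  cases y with
  | inl a =>
    rw [psiG'_inl, map_sub, Phi_Xg]
    by_cases hc : G.r a.1 ∈ G.BH H ∧ G.r a.1 ∉ S
    · rw [dif_pos hc, map_mul, Phi_Xg, Phi_vH R G H S hH hS (G.r a.1) hc.1, dif_pos hc,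
        phiG, dif_pos a.2, dif_pos hc]
      have h1 : Xv R (quotGraph G H S hH) (Sum.inr ⟨G.r a.1, hc⟩) *
          Xg R (quotGraph G H S hH) (Sum.inl ⟨a.1, a.2⟩) = 0 :=
        Xv_mul_Xg_ne R (quotGraph G H S hH) _ _ Sum.inr_ne_inl
      have h2 : Xv R (quotGraph G H S hH) (Sum.inr ⟨G.r a.1, hc⟩) *
          Xg R (quotGraph G H S hH) (Sum.inr ⟨a.1, hc⟩)
          = Xg R (quotGraph G H S hH) (Sum.inr ⟨a.1, hc⟩) :=
        Xv_mul_Xg R (quotGraph G H S hH) (Sum.inr ⟨a.1, hc⟩)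
      rw [mul_add, h1, h2, zero_add, add_sub_cancel_right]
    · rw [dif_neg hc, map_zero, sub_zero, phiG, dif_pos a.2, dif_neg hc, add_zero]
  | inr b =>
    rw [psiG'_inr, map_mul, Phi_Xg, Phi_vH R G H S hH hS (G.r b.1) b.2.1, dif_pos b.2,
      phiG, dif_pos b.2.1.1, dif_pos b.2]
    have h1 : Xv R (quotGraph G H S hH) (Sum.inr ⟨G.r b.1, b.2⟩) *
        Xg R (quotGraph G H S hH) (Sum.inl ⟨b.1, b.2.1.1⟩) = 0 :=
      Xv_mul_Xg_ne R (quotGraph G H S hH) _ _ Sum.inr_ne_inl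
    have h2 : Xv R (quotGraph G H S hH) (Sum.inr ⟨G.r b.1, b.2⟩) *
        Xg R (quotGraph G H S hH) (Sum.inr ⟨b.1, b.2⟩)
        = Xg R (quotGraph G H S hH) (Sum.inr ⟨b.1, b.2⟩) :=
      Xv_mul_Xg R (quotGraph G H S hH) (Sum.inr ⟨b.1, b.2⟩)
    rw [mul_add, h1, h2, zero_add]

lemma Psi_phiV (v : G.V) :
    Psi R G H S hH (phiV R G H S hH v) = piQ R G H S (Xv R G v) := by
  rw [phiV]
  by_cases hv : v ∈ H
  · rw [dif_pos hv, map_zero, piQ_Xv_of_mem R G H S v hv]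
  · rw [dif_neg hv]
    by_cases hc : v ∈ G.BH H ∧ v ∉ S
    · erw [dif_pos hc, map_add, Psi_Xv, Psi_Xv, psiV'_inr, psiV'_inl, dif_pos hc,
        ← map_add]
      congr 1
      exact sub_add_cancel _ _
    · erw [dif_neg hc, add_zero, Psi_Xv, psiV'_inl, dif_neg hc, sub_zero]

lemma Psi_phiE (e : G.E) :
    Psi R G H S hH (phiE R G H S hH e) = piQ R G H S (Xe R G e) := by
  rw [phiE]
  by_cases he : G.r e ∉ H
  · rw [dif_pos he]
    by_cases hc : G.r e ∈ G.BH H ∧ G.r e ∉ S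
    · erw [dif_pos hc, map_add, Psi_Xe, Psi_Xe, psiE'_inr, psiE'_inl, dif_pos hc,
        ← map_add]
      congr 1
      exact sub_add_cancel _ _
    · erw [dif_neg hc, add_zero, Psi_Xe, psiE'_inl, dif_neg hc, sub_zero]
  · rw [dif_neg he, map_zero]
    have hre : G.r e ∈ H := not_not.mp he
    rw [← Xe_mul_Xv R G e, map_mul, piQ_Xv_of_mem R G H S (G.r e) hre, mul_zero]

lemma Psi_phiG (e : G.E) :
    Psi R G H S hH (phiG R G H S hH e) = piQ R G H S (Xg R G e) := by
  rw [phiG]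
  by_cases he : G.r e ∉ H
  · rw [dif_pos he]
    by_cases hc : G.r e ∈ G.BH H ∧ G.r e ∉ S
    · erw [dif_pos hc, map_add, Psi_Xg, Psi_Xg, psiG'_inr, psiG'_inl, dif_pos hc,
        ← map_add]
      congr 1
      exact sub_add_cancel _ _
    · erw [dif_neg hc, add_zero, Psi_Xg, psiG'_inl, dif_neg hc, sub_zero]
  · rw [dif_neg he, map_zero]
    have hre : G.r e ∈ H := not_not.mp he
    rw [← Xv_mul_Xg R G e, map_mul, piQ_Xv_of_mem R G H S (G.r e) hre, zero_mul]

variable (hSB : S ⊆ G.BH H)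

lemma comp1 : (PhiQ R G H S hH hS hSB).comp (Psi R G H S hH)
    = AlgHom.id R (LPA R (quotGraph G H S hH)) := by
  apply RingQuot.ringQuot_ext'
  refine FreeAlgebra.hom_ext (funext fun x => ?_)
  cases x with
  | vertex w =>
      show PhiQ R G H S hH hS hSB (Psi R G H S hH (Xv R (quotGraph G H S hH) w))
        = Xv R (quotGraph G H S hH) w
      rw [Psi_Xv, PhiQ_piQ, Phi_psiV']
  | edge y =>
      show PhiQ R G H S hH hS hSB (Psi R G H S hH (Xe R (quotGraph G H S hH) y))
        = Xe R (quotGraph G H S hH) y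
      rw [Psi_Xe, PhiQ_piQ, Phi_psiE']
  | ghost y =>
      show PhiQ R G H S hH hS hSB (Psi R G H S hH (Xg R (quotGraph G H S hH) y))
        = Xg R (quotGraph G H S hH) y
      rw [Psi_Xg, PhiQ_piQ, Phi_psiG']

lemma comp2 : (Psi R G H S hH).comp (PhiQ R G H S hH hS hSB)
    = AlgHom.id R (QuotLPA R G (IHS R G H S)) := by
  apply RingQuot.ringQuot_ext'
  apply RingQuot.ringQuot_ext'
  refine FreeAlgebra.hom_ext (funext fun x => ?_)
  cases x with
  | vertex v =>
      show Psi R G H S hH (PhiQ R G H S hH hS hSB (piQ R G H S (Xv R G v)))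
        = piQ R G H S (Xv R G v)
      rw [PhiQ_piQ, Phi_Xv, Psi_phiV]
  | edge e =>
      show Psi R G H S hH (PhiQ R G H S hH hS hSB (piQ R G H S (Xe R G e)))
        = piQ R G H S (Xe R G e)
      rw [PhiQ_piQ, Phi_Xe, Psi_phiE]
  | ghost e =>
      show Psi R G H S hH (PhiQ R G H S hH hS hSB (piQ R G H S (Xg R G e)))
        = piQ R G H S (Xg R G e)
      rw [PhiQ_piQ, Phi_Xg, Psi_phiG]

end Inverse

/-- `L_R(E)/I(H,S)` is isomorphic as an `R`-algebra to the Leavitt path algebra of the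
quotient graph `E/(H,S)`. -/
theorem quotient_IHS_iso (G : LPGraph) (R : Type) [CommRing R] (H S : Set G.V)
    (hAdm : G.Admissible H S) :
    Nonempty (QuotLPA R G (IHS R G H S) ≃ₐ[R] LPA R (quotGraph G H S hAdm.1)) := by
  exact ⟨AlgEquiv.ofAlgHom (PhiQ R G H S hAdm.1 hAdm.2.1 hAdm.2.2)
    (Psi R G H S hAdm.1)
    (comp1 R G H S hAdm.1 hAdm.2.1 hAdm.2.2)
    (comp2 R G H S hAdm.1 hAdm.2.1 hAdm.2.2)⟩
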